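/- arXiv:2403.15563 — 6 statements merged into one kernel-verified Lean document; each statement's English description precedes it below -/
import Mathlib

section
/- Let D be a nonempty set of the form D = ∏_{i=1}^d I_i (a product of sets I_i), let F be a linear subspace of real-valued functions on D, and let P_1, …, P_d : F → F be linear operators satisfying Assumption I: (1) each P_j is a projection (P_j ∘ P_j = P_j), (2) P_i ∘ P_j = P_j ∘ P_i for all i, j, (3) for every f ∈ F the function P_j f is independent of the j-th coordinate (i.e. P_j f takes equal values at any two points of D agreeing in all coordinates except the j-th), and (4) P_j f = f whenever f ∈ F is independent of the j-th coordinate. For u ⊆ {1,…,d} define f_u := (∏_{j∈u} (Id − P_j)) ∘ (∏_{j∉u} P_j) applied to f. Then: (a) f = Σ_{u ⊆ {1,…,d}} f_u; and (b) this decomposition is minimal in the following sense: if f = Σ_{u ⊆ {1,…,d}} g_u is any decomposition with each g_u ∈ F independent of every coordinate j ∉ u, and if for some fixed u ⊆ {1,…,d} one has g_v = 0 for all v ⊇ u, then also f_v = 0 for all v ⊇ u. -/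
lemma commA {M ι : Type*} [Ring M] (P : ι → M) (hc : ∀ i j, P i * P j = P j * P i)
    (u v : Finset ι) [DecidableEq ι] (i j : ι) :
    Commute (if i ∈ u then 1 - P i else P i) (if j ∈ v then 1 - P j else P j) := by
  have h : Commute (P i) (P j) := hc i j
  have h1 : Commute (1 - P i) (P j) := (Commute.one_left _).sub_left h
  have h2 : Commute (P i) (1 - P j) := (Commute.one_right _).sub_right h
  have h3 : Commute (1 - P i) (1 - P j) := (Commute.one_right _).sub_right h1
  split_ifs <;> assumption

lemma sumA {M ι : Type*} [Ring M] [DecidableEq ι] (P : ι → M)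
    (hc : ∀ i j, P i * P j = P j * P i) (s : Finset ι) :
    ∑ u ∈ s.powerset, s.noncommProd (fun j => if j ∈ u then 1 - P j else P j)
      (fun i _ j _ _ => commA P hc u u i j) = 1 := by
  induction s using Finset.induction_on with
  | empty => simp
  | @insert a s ha ih =>
    rw [Finset.sum_powerset_insert ha]
    have e1 : ∀ u ∈ s.powerset,
        (insert a s).noncommProd (fun j => if j ∈ u then 1 - P j else P j)
          (fun i _ j _ _ => commA P hc u u i j)
        = P a * s.noncommProd (fun j => if j ∈ u then 1 - P j else P j)
          (fun i _ j _ _ => commA P hc u u i j) := by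
      intro u hu
      erw [Finset.noncommProd_insert_of_notMem _ _ _ _ ha]
      have hau : a ∉ u := fun hau => ha (Finset.mem_powerset.mp hu hau)
      rw [if_neg hau]
    have e2 : ∀ u ∈ s.powerset,
        (insert a s).noncommProd (fun j => if j ∈ insert a u then 1 - P j else P j)
          (fun i _ j _ _ => commA P hc (insert a u) (insert a u) i j)
        = (1 - P a) * s.noncommProd (fun j => if j ∈ u then 1 - P j else P j)
          (fun i _ j _ _ => commA P hc u u i j) := by
      intro u hu
      erw [Finset.noncommProd_insert_of_notMem _ _ _ _ ha, if_pos (Finset.mem_insert_self a u)]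
      congr 1
      refine Finset.noncommProd_congr rfl (fun j hj => ?_) _
      have hja : j ≠ a := fun h => ha (h ▸ hj)
      simp [Finset.mem_insert, hja]
    rw [Finset.sum_congr rfl e1, Finset.sum_congr rfl e2, ← Finset.sum_add_distrib]
    have : ∀ u ∈ s.powerset,
        P a * s.noncommProd (fun j => if j ∈ u then 1 - P j else P j)
          (fun i _ j _ _ => commA P hc u u i j)
        + (1 - P a) * s.noncommProd (fun j => if j ∈ u then 1 - P j else P j)
          (fun i _ j _ _ => commA P hc u u i j)
        = s.noncommProd (fun j => if j ∈ u then 1 - P j else P j)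
          (fun i _ j _ _ => commA P hc u u i j) := by
      intro u hu
      rw [← add_mul]
      simp
    rw [Finset.sum_congr rfl this, ih]



/-- Kuo–Sloan–Wasilkowski–Woźniakowski minimal decomposition.
`D = ∏ I i` is a nonempty product set, `F` is a linear subspace of real-valued
functions on `D`, and `P j : F → F` are commuting projections such that `P j f`
is independent of the `j`-th coordinate and `P j f = f` whenever `f` is
independent of the `j`-th coordinate (Assumption I).  With
`f_u := (∏_{j∈u} (Id − P j)) ∘ (∏_{j∉u} P j) f`
(encoded as the product over all `j` of `Id − P j` for `j ∈ u` and `P j` otherwise),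
(a) `f = Σ_{u ⊆ [d]} f_u`, and (b) for any decomposition `f = Σ_u g_u` with `g_u`
independent of every coordinate outside `u`, if `g_v = 0` for all `v ⊇ u` then
`f_v = 0` for all `v ⊇ u`. -/
theorem statement_0 {d : ℕ} {I : Fin d → Type*} [∀ i, Nonempty (I i)]
    (F : Submodule ℝ ((∀ i, I i) → ℝ))
    (P : Fin d → Module.End ℝ F)
    (hproj : ∀ j, P j * P j = P j)
    (hcomm : ∀ i j, P i * P j = P j * P i)
    (hindep : ∀ (j : Fin d) (f : F) (x y : ∀ i, I i),
      (∀ i, i ≠ j → x i = y i) → (P j f : (∀ i, I i) → ℝ) x = (P j f : (∀ i, I i) → ℝ) y)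
    (hfix : ∀ (j : Fin d) (f : F),
      (∀ x y : ∀ i, I i, (∀ i, i ≠ j → x i = y i) →
        (f : (∀ i, I i) → ℝ) x = (f : (∀ i, I i) → ℝ) y) → P j f = f)
    (f : F)
    (term : Finset (Fin d) → F)
    (hterm : ∀ u : Finset (Fin d),
      term u =
        (Finset.univ.noncommProd
          (fun j => if j ∈ u then (1 : Module.End ℝ F) - P j else P j)
          (fun i _ j _ hij => by
            have e : P i * P j = P j * P i := hcomm i j
            have key : ∀ v, P i (P j v) = P j (P i v) := by
              intro v
              have := DFunLike.congr_fun e v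
              simpa only [Module.End.mul_apply] using this
            have h1 : ((1 : Module.End ℝ F) - P i) * P j
                = P j * ((1 : Module.End ℝ F) - P i) := by
              refine LinearMap.ext fun v => ?_
              simp only [Module.End.mul_apply, LinearMap.sub_apply, Module.End.one_apply,
                map_sub, key]
            have h2 : P i * ((1 : Module.End ℝ F) - P j)
                = ((1 : Module.End ℝ F) - P j) * P i := by
              refine LinearMap.ext fun v => ?_
              simp only [Module.End.mul_apply, LinearMap.sub_apply, Module.End.one_apply,
                map_sub, key]
            have h3 : ((1 : Module.End ℝ F) - P i) * ((1 : Module.End ℝ F) - P j)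
                = ((1 : Module.End ℝ F) - P j) * ((1 : Module.End ℝ F) - P i) := by
              refine LinearMap.ext fun v => ?_
              simp only [Module.End.mul_apply, LinearMap.sub_apply, Module.End.one_apply,
                map_sub, key]
              abel
            dsimp only [Function.onFun]
            split_ifs
            · exact h3
            · exact h1
            · exact h2
            · exact e)) f) :
    -- (a) the decomposition property
    f = ∑ u : Finset (Fin d), term u ∧
    -- (b) minimality
    ∀ g : Finset (Fin d) → F,
      (∀ (u : Finset (Fin d)) (x y : ∀ i, I i), (∀ i ∈ u, x i = y i) →
        (g u : (∀ i, I i) → ℝ) x = (g u : (∀ i, I i) → ℝ) y) →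
      f = ∑ u : Finset (Fin d), g u →
      ∀ u : Finset (Fin d), (∀ v, u ⊆ v → g v = 0) → ∀ v, u ⊆ v → term v = 0 := by
  classical
  have h1 : ∀ u : Finset (Fin d), term u =
      (Finset.univ.noncommProd
        (fun j => if j ∈ u then (1 : Module.End ℝ F) - P j else P j)
        (fun i _ j _ _ => commA P hcomm u u i j)) f := fun u => hterm u
  have hsum1 : (∑ u : Finset (Fin d), Finset.univ.noncommProd
      (fun j => if j ∈ u then (1 : Module.End ℝ F) - P j else P j)
      (fun i _ j _ _ => commA P hcomm u u i j)) = 1 := by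
    have := sumA P hcomm (Finset.univ : Finset (Fin d))
    rwa [Finset.powerset_univ] at this
  constructor
  · calc f = (1 : Module.End ℝ F) f := rfl
    _ = (∑ u : Finset (Fin d), Finset.univ.noncommProd
          (fun j => if j ∈ u then (1 : Module.End ℝ F) - P j else P j)
          (fun i _ j _ _ => commA P hcomm u u i j)) f := by rw [hsum1]
    _ = ∑ u : Finset (Fin d), term u := by
        rw [LinearMap.sum_apply]
        exact Finset.sum_congr rfl (fun u _ => (h1 u).symm)
  · intro g hg hsum u hg0 v huv
    rw [h1 v, hsum, map_sum]
    refine Finset.sum_eq_zero (fun w _ => ?_)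
    by_cases hvw : v ⊆ w
    · rw [hg0 w (huv.trans hvw), map_zero]
    · obtain ⟨j, hjv, hjw⟩ := Finset.not_subset.mp hvw
      have hfac := Finset.noncommProd_erase_mul Finset.univ (Finset.mem_univ j)
        (fun j' => if j' ∈ v then (1 : Module.End ℝ F) - P j' else P j')
        (fun i _ j' _ _ => commA P hcomm v v i j')
      rw [← hfac, Module.End.mul_apply]
      have hPj : P j (g w) = g w := by
        refine hfix j (g w) (fun x y hxy => hg w x y (fun i hi => hxy i ?_))
        rintro rfl; exact hjw hi
      have hz : (if j ∈ v then (1 : Module.End ℝ F) - P j else P j) (g w) = 0 := by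
        rw [if_pos hjv, LinearMap.sub_apply, Module.End.one_apply, hPj, sub_self]
      rw [hz, map_zero]
end

section
/- Let D = ∏_{i=1}^d [a_i, b_i] ⊂ ℝ^d with a_i < b_i, let f : D → ℝ be twice continuously differentiable, let i ≠ j be indices in {1,…,d}, and suppose ∂²f/∂x_i∂x_j vanishes identically on D. Then for every anchor c ∈ D and every subset u ⊆ {1,…,d} with {i,j} ⊆ u, the anchored decomposition term f_{u,c} is identically zero on D. -/
/-- The anchored decomposition term
`f_{u,c}(x) = Σ_{v ⊆ u} (−1)^{|u|−|v|} f(x^{v,c})`, where `x^{v,c}` has `i`-th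
coordinate `x i` for `i ∈ v` and `c i` otherwise. -/
noncomputable def anchoredTerm {d : ℕ} (f : (Fin d → ℝ) → ℝ) (c : Fin d → ℝ)
    (u : Finset (Fin d)) (x : Fin d → ℝ) : ℝ :=
  ∑ v ∈ u.powerset, (-1 : ℝ) ^ (u.card - v.card) * f (fun i => if i ∈ v then x i else c i)

/-- A real function with vanishing derivative on `[lo, hi]` is constant there. -/
lemma eq_of_hasDerivAt_zero {g : ℝ → ℝ} {lo hi : ℝ}
    (h : ∀ t ∈ Set.Icc lo hi, HasDerivAt g 0 t) :
    ∀ s ∈ Set.Icc lo hi, ∀ t ∈ Set.Icc lo hi, g s = g t := by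
  have hcont : ContinuousOn g (Set.Icc lo hi) := fun t ht =>
    ((h t ht).continuousAt).continuousWithinAt
  have key := constant_of_has_deriv_right_zero hcont
    (fun t ht => ((h t (Set.mem_Icc_of_Ico ht)).hasDerivWithinAt))
  intro s hs t ht
  rw [key s hs, key t ht]

/-- Rectangle identity from vanishing mixed partial derivative. -/
lemma rect_identity {d : ℕ} {a b : Fin d → ℝ} {f : (Fin d → ℝ) → ℝ} (hf : ContDiff ℝ 2 f)
    {i j : Fin d} (hij : i ≠ j)
    (hmixed : ∀ x ∈ Set.univ.pi fun k => Set.Icc (a k) (b k),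
      fderiv ℝ (fun y => fderiv ℝ f y (Pi.single j 1)) x (Pi.single i 1) = 0)
    {q : Fin d → ℝ} (hq : ∀ k, q k ∈ Set.Icc (a k) (b k))
    {xi ci xj cj : ℝ} (hxi : xi ∈ Set.Icc (a i) (b i)) (hci : ci ∈ Set.Icc (a i) (b i))
    (hxj : xj ∈ Set.Icc (a j) (b j)) (hcj : cj ∈ Set.Icc (a j) (b j)) :
    f (Function.update (Function.update q i xi) j xj)
      - f (Function.update (Function.update q i ci) j xj)
      - f (Function.update (Function.update q i xi) j cj)
      + f (Function.update (Function.update q i ci) j cj) = 0 := by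
  have hfd : Differentiable ℝ f := hf.differentiable two_ne_zero
  set F : (Fin d → ℝ) → ℝ := fun y => fderiv ℝ f y (Pi.single j 1) with hFdef
  have hFc : Differentiable ℝ F := by
    have h1 : ContDiff ℝ 1 (fderiv ℝ f) := hf.fderiv_right (le_refl _)
    exact (h1.clm_apply contDiff_const).differentiable one_ne_zero
  have hmemP : ∀ s ∈ Set.Icc (a i) (b i), ∀ t ∈ Set.Icc (a j) (b j),
      Function.update (Function.update q i s) j t ∈
        Set.univ.pi fun k => Set.Icc (a k) (b k) := by
    intro s hs t ht k _
    rcases eq_or_ne k j with rfl | hkj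
    · simpa using ht
    · rcases eq_or_ne k i with rfl | hki
      · simp only [Function.update_apply, hkj, if_false, if_pos rfl]
        exact hs
      · simp only [Function.update_apply, hkj, hki, if_false]
        exact hq k
  have hFconst : ∀ t ∈ Set.Icc (a j) (b j),
      F (Function.update (Function.update q i xi) j t)
        = F (Function.update (Function.update q i ci) j t) := by
    intro t ht
    have hd : ∀ s ∈ Set.Icc (a i) (b i),
        HasDerivAt (fun s => F (Function.update (Function.update q j t) i s)) 0 s := by
      intro s hs
      have h1 : HasDerivAt (Function.update (Function.update q j t) i) (Pi.single i 1) s :=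
        hasDerivAt_update _ i s
      have h2 := (hFc (Function.update (Function.update q j t) i s)).hasFDerivAt.comp_hasDerivAt
        s h1
      have h3 : fderiv ℝ F (Function.update (Function.update q j t) i s) (Pi.single i 1) = 0 := by
        apply hmixed
        rw [Function.update_comm (Ne.symm hij)]
        exact hmemP s hs t ht
      rwa [h3] at h2
    have hkey := eq_of_hasDerivAt_zero hd xi hxi ci hci
    simp only [Function.update_comm (Ne.symm hij : j ≠ i)] at hkey
    exact hkey
  have hg : ∀ t ∈ Set.Icc (a j) (b j),
      HasDerivAt (fun t => f (Function.update (Function.update q i xi) j t)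
         - f (Function.update (Function.update q i ci) j t)) 0 t := by
    intro t ht
    have h1 : HasDerivAt (fun t => f (Function.update (Function.update q i xi) j t))
        (F (Function.update (Function.update q i xi) j t)) t :=
      (hfd _).hasFDerivAt.comp_hasDerivAt t (hasDerivAt_update _ j t)
    have h2 : HasDerivAt (fun t => f (Function.update (Function.update q i ci) j t))
        (F (Function.update (Function.update q i ci) j t)) t :=
      (hfd _).hasFDerivAt.comp_hasDerivAt t (hasDerivAt_update _ j t)
    have h3 := h1.sub h2
    rwa [hFconst t ht, sub_self] at h3
  have hfin := eq_of_hasDerivAt_zero hg xj hxj cj hcj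
  linarith [hfin]

/-- if `f` is `C²` and `∂²f/∂x_i∂x_j` vanishes identically on the
box `D = ∏ [a k, b k]` for some `i ≠ j`, then for every anchor `c ∈ D` and every
`u ⊆ {1,…,d}` with `{i,j} ⊆ u`, the anchored term `f_{u,c}` vanishes identically
on `D`. -/
theorem statement_3 {d : ℕ} (a b : Fin d → ℝ) (hab : ∀ k, a k < b k)
    (f : (Fin d → ℝ) → ℝ) (hf : ContDiff ℝ 2 f)
    (i j : Fin d) (hij : i ≠ j)
    (hmixed : ∀ x ∈ Set.univ.pi fun k => Set.Icc (a k) (b k),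
      fderiv ℝ (fun y => fderiv ℝ f y (Pi.single j 1)) x (Pi.single i 1) = 0) :
    ∀ c ∈ Set.univ.pi fun k => Set.Icc (a k) (b k),
      ∀ u : Finset (Fin d), i ∈ u → j ∈ u →
        ∀ x ∈ Set.univ.pi fun k => Set.Icc (a k) (b k),
          anchoredTerm f c u x = 0 := by
  classical
  intro c hc u hiu hju x hx
  have hxk : ∀ k, x k ∈ Set.Icc (a k) (b k) := fun k => hx k (Set.mem_univ k)
  have hck : ∀ k, c k ∈ Set.Icc (a k) (b k) := fun k => hc k (Set.mem_univ k)
  set u' := (u.erase i).erase j with hu'def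
  have hji : j ∈ u.erase i := Finset.mem_erase.2 ⟨Ne.symm hij, hju⟩
  have hju' : j ∉ u' := Finset.notMem_erase j _
  have hiu' : i ∉ insert j u' := by
    simp only [Finset.mem_insert]
    rintro (rfl | hi)
    · exact hij rfl
    · exact Finset.notMem_erase i u (Finset.mem_of_mem_erase hi)
  have hu : u = insert i (insert j u') := by
    rw [hu'def, Finset.insert_erase hji, Finset.insert_erase hiu]
  have hcard : u.card = u'.card + 2 := by
    rw [hu, Finset.card_insert_of_notMem hiu', Finset.card_insert_of_notMem hju']
  rw [anchoredTerm, hu, Finset.sum_powerset_insert hiu', Finset.sum_powerset_insert hju',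
    Finset.sum_powerset_insert hju']
  rw [← hu]
  simp only [← Finset.sum_add_distrib]
  apply Finset.sum_eq_zero
  intro w hw
  have hwsub : w ⊆ u' := Finset.mem_powerset.1 hw
  have hiw : i ∉ w := fun h => hiu' (Finset.mem_insert_of_mem (hwsub h))
  have hjw : j ∉ w := fun h => hju' (hwsub h)
  have hijw : i ∉ insert j w := by
    simp only [Finset.mem_insert]
    rintro (rfl | h)
    · exact hij rfl
    · exact hiw h
  have hkle : w.card ≤ u'.card := Finset.card_le_card hwsub
  set m := u'.card - w.card with hm
  have e0 : u.card - w.card = m + 2 := by omega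
  have e1 : u.card - (insert j w).card = m + 1 := by
    rw [Finset.card_insert_of_notMem hjw]; omega
  have e2 : u.card - (insert i w).card = m + 1 := by
    rw [Finset.card_insert_of_notMem hiw]; omega
  have e3 : u.card - (insert i (insert j w)).card = m := by
    rw [Finset.card_insert_of_notMem hijw, Finset.card_insert_of_notMem hjw]; omega
  -- point identities
  have hq : ∀ k, (fun k => if k ∈ w then x k else c k) k ∈ Set.Icc (a k) (b k) := by
    intro k; dsimp only; split_ifs
    · exact hxk k
    · exact hck k
  have hr := rect_identity hf hij hmixed hq (hxk i) (hck i) (hxk j) (hck j)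
  have p0 : (fun k => if k ∈ w then x k else c k)
      = Function.update (Function.update (fun k => if k ∈ w then x k else c k) i (c i)) j (c j) := by
    funext k
    rcases eq_or_ne k j with rfl | hkj
    · simp [hjw]
    · rcases eq_or_ne k i with rfl | hki
      · simp [Function.update_apply, hkj, hiw]
      · simp [Function.update_apply, hkj, hki]
  have p1 : (fun k => if k ∈ insert j w then x k else c k)
      = Function.update (Function.update (fun k => if k ∈ w then x k else c k) i (c i)) j (x j) := by
    funext k
    rcases eq_or_ne k j with rfl | hkj
    · simp
    · rcases eq_or_ne k i with rfl | hki
      · simp [Function.update_apply, hkj, hiw, Finset.mem_insert, hij]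
      · simp [Function.update_apply, hkj, hki, Finset.mem_insert, hkj]
  have p2 : (fun k => if k ∈ insert i w then x k else c k)
      = Function.update (Function.update (fun k => if k ∈ w then x k else c k) i (x i)) j (c j) := by
    funext k
    rcases eq_or_ne k j with rfl | hkj
    · simp [Finset.mem_insert, Ne.symm hij, hjw]
    · rcases eq_or_ne k i with rfl | hki
      · simp [Function.update_apply, hkj]
      · simp [Function.update_apply, hkj, hki, Finset.mem_insert]
  have p3 : (fun k => if k ∈ insert i (insert j w) then x k else c k)
      = Function.update (Function.update (fun k => if k ∈ w then x k else c k) i (x i)) j (x j) := by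
    funext k
    rcases eq_or_ne k j with rfl | hkj
    · simp [Finset.mem_insert]
    · rcases eq_or_ne k i with rfl | hki
      · simp [Function.update_apply, hkj]
      · simp [Function.update_apply, hkj, hki, Finset.mem_insert]
  rw [e0, e1, e2, e3, p0, p1, p2, p3]
  linear_combination ((-1 : ℝ)) ^ m * hr
end

section
/- Let D = ∏_{i=1}^d [a_i, b_i] ⊂ ℝ^d with a_i < b_i, let v ⊆ u ⊆ {1,…,d}, and let f : D → ℝ be |v| times continuously differentiable (so that the mixed partial derivative ∂_v f := ∂^{|v|} f / ∏_{i∈v} ∂x_i exists and is continuous). Then for every anchor c ∈ D the anchored term satisfies the sup-norm bound ‖f_{u,c}‖_∞ ≤ 2^{|u|−|v|} · ‖∂_v f‖_∞ · vol(D_v), where vol(D_v) = ∏_{i∈v} (b_i − a_i) and ‖·‖_∞ is the supremum norm over D. -/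
/-- The mixed partial derivative `∂_v f = ∂^{|v|} f / ∏_{i∈v} ∂x_i`. -/
noncomputable def mixedPartial {d : ℕ} (v : Finset (Fin d)) (f : (Fin d → ℝ) → ℝ) :
    (Fin d → ℝ) → ℝ :=
  v.toList.foldr (fun i g => fun x => fderiv ℝ g x (Pi.single i 1)) f

noncomputable def listPartial {d : ℕ} (l : List (Fin d)) (f : (Fin d → ℝ) → ℝ) :
    (Fin d → ℝ) → ℝ :=
  l.foldr (fun i g => fun x => fderiv ℝ g x (Pi.single i 1)) f

lemma mixedPartial_eq {d : ℕ} (v : Finset (Fin d)) (f : (Fin d → ℝ) → ℝ) :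
    mixedPartial v f = listPartial v.toList f := rfl

lemma contDiff_step {d n : ℕ} {f : (Fin d → ℝ) → ℝ} (hf : ContDiff ℝ (n + 1 : ℕ) f)
    (i : Fin d) : ContDiff ℝ (n : ℕ) (fun x => fderiv ℝ f x (Pi.single i 1)) := by
  apply ContDiff.clm_apply _ contDiff_const
  apply hf.fderiv_right
  exact_mod_cast le_refl ((n:WithTop ℕ∞) + 1)

lemma contDiff_listPartial {d : ℕ} (l : List (Fin d)) {n : ℕ} {f : (Fin d → ℝ) → ℝ}
    (hf : ContDiff ℝ (n + l.length : ℕ) f) : ContDiff ℝ (n : ℕ) (listPartial l f) := by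
  induction l generalizing n with
  | nil => simpa [listPartial] using hf
  | cons i l ih =>
      have : ContDiff ℝ ((n + 1 : ℕ)) (listPartial l f) := by
        apply ih
        have : n + 1 + l.length = n + (i :: l).length := by simp; ring
        rwa [this]
      exact contDiff_step this i

lemma contDiff_updateLeft {d : ℕ} (j : Fin d) (t : ℝ) :
    ContDiff ℝ ⊤ (fun y : Fin d → ℝ => Function.update y j t) := by
  have : (fun y : Fin d → ℝ => Function.update y j t)
      = fun y i => if i = j then t else y i := by
    funext y i; simp [Function.update_apply]
  rw [this]
  apply contDiff_pi.2
  intro i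
  by_cases h : i = j
  · simp only [h, if_true]; exact contDiff_const
  · simp only [h, if_false]
    exact (ContinuousLinearMap.proj i : (Fin d → ℝ) →L[ℝ] ℝ).contDiff

noncomputable def projAway {d : ℕ} (j : Fin d) : (Fin d → ℝ) →L[ℝ] (Fin d → ℝ) :=
  ContinuousLinearMap.pi (fun k => if k = j then 0 else ContinuousLinearMap.proj k)

lemma projAway_apply {d : ℕ} (j : Fin d) (z : Fin d → ℝ) (k : Fin d) :
    projAway j z k = if k = j then 0 else z k := by
  simp only [projAway, ContinuousLinearMap.pi_apply]
  by_cases h : k = j <;> simp [h]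

lemma projAway_single {d : ℕ} {i j : Fin d} (h : i ≠ j) :
    projAway j (Pi.single i (1:ℝ)) = Pi.single i (1:ℝ) := by
  funext k
  rw [projAway_apply]
  by_cases hk : k = j
  · subst hk
    simp [Pi.single_eq_of_ne (Ne.symm h)]
  · simp [hk]

lemma hasFDerivAt_updateLeft {d : ℕ} (j : Fin d) (t : ℝ) (y : Fin d → ℝ) :
    HasFDerivAt (fun z : Fin d → ℝ => Function.update z j t) (projAway j) y := by
  have : (fun z : Fin d → ℝ => Function.update z j t)
      = fun z => projAway j z + Pi.single j t := by
    funext z k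
    rw [Pi.add_apply, projAway_apply, Function.update_apply]
    by_cases h : k = j
    · subst h; simp
    · simp [h, Pi.single_eq_of_ne h]
  rw [this]
  exact (projAway j).hasFDerivAt.add_const _

lemma listPartial_update {d : ℕ} : ∀ (l : List (Fin d)) (j : Fin d) (t : ℝ), j ∉ l →
    ∀ h : (Fin d → ℝ) → ℝ, ContDiff ℝ (l.length : ℕ) h →
    listPartial l (fun z => h (Function.update z j t))
      = fun y => listPartial l h (Function.update y j t) := by
  intro l
  induction l with
  | nil => intro j t _ h _; rfl
  | cons i l ih =>
      intro j t hj h hh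
      have hh' : ContDiff ℝ (l.length : ℕ) h := by
        apply hh.of_le
        exact_mod_cast Nat.le_succ _
      have hij : i ≠ j := fun he => hj (he ▸ (List.mem_cons_self : i ∈ i :: l))
      have hjl : j ∉ l := fun he => hj (List.mem_cons_of_mem _ he)
      show (fun y => fderiv ℝ (listPartial l (fun z => h (Function.update z j t))) y
          (Pi.single i 1)) = _
      rw [ih j t hjl h hh']
      funext y
      have hH : ContDiff ℝ (1 : ℕ) (listPartial l h) := by
        apply contDiff_listPartial
        have : 1 + l.length = l.length + 1 := by ring
        rw [this]
        exact_mod_cast hh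
      have hHd : HasFDerivAt (listPartial l h)
          (fderiv ℝ (listPartial l h) (Function.update y j t)) (Function.update y j t) :=
        ((hH.differentiable (by simp)).differentiableAt).hasFDerivAt
      have hcomp : HasFDerivAt (fun z => listPartial l h (Function.update z j t))
          ((fderiv ℝ (listPartial l h) (Function.update y j t)).comp (projAway j)) y :=
        hHd.comp y (hasFDerivAt_updateLeft j t y)
      rw [hcomp.fderiv]
      show fderiv ℝ (listPartial l h) (Function.update y j t) (projAway j (Pi.single i 1)) =
        fderiv ℝ (listPartial l h) (Function.update y j t) (Pi.single i 1)
      rw [projAway_single hij]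

lemma anchoredTerm_insert {d : ℕ} (f : (Fin d → ℝ) → ℝ) (c x : Fin d → ℝ)
    {j : Fin d} {v : Finset (Fin d)} (hj : j ∉ v) :
    anchoredTerm f c (insert j v) x =
      anchoredTerm (fun y => f (Function.update y j (x j))) c v x
        - anchoredTerm (fun y => f (Function.update y j (c j))) c v x := by
  simp only [anchoredTerm]
  rw [Finset.sum_powerset_insert hj]
  have e1 : ∀ r ∈ v.powerset,
      (-1:ℝ) ^ ((insert j v).card - (insert j r).card) *
        f (fun i => if i ∈ insert j r then x i else c i)
      = (-1:ℝ) ^ (v.card - r.card) *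
        f (Function.update (fun i => if i ∈ r then x i else c i) j (x j)) := by
    intro r hr
    have hjr : j ∉ r := fun h => hj (Finset.mem_powerset.mp hr h)
    congr 1
    · rw [Finset.card_insert_of_notMem hj, Finset.card_insert_of_notMem hjr,
        Nat.succ_sub_succ]
    · congr 1
      funext i
      rw [Function.update_apply]
      by_cases h : i = j
      · subst h; simp
      · simp [h, Finset.mem_insert]
  have e2 : ∀ r ∈ v.powerset,
      (-1:ℝ) ^ ((insert j v).card - r.card) * f (fun i => if i ∈ r then x i else c i)
      = -((-1:ℝ) ^ (v.card - r.card) *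
        f (Function.update (fun i => if i ∈ r then x i else c i) j (c j))) := by
    intro r hr
    have hrv : r ⊆ v := Finset.mem_powerset.mp hr
    have hjr : j ∉ r := fun h => hj (hrv h)
    have hcard : (insert j v).card - r.card = (v.card - r.card) + 1 := by
      rw [Finset.card_insert_of_notMem hj, Nat.succ_sub (Finset.card_le_card hrv)]
    rw [hcard, pow_succ]
    have : (Function.update (fun i => if i ∈ r then x i else c i) j (c j))
        = fun i => if i ∈ r then x i else c i := by
      funext i
      rw [Function.update_apply]
      by_cases h : i = j
      · subst h; simp [hjr]
      · simp [h]
    rw [this]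
    ring
  rw [Finset.sum_congr rfl e1, Finset.sum_congr rfl e2]
  rw [Finset.sum_neg_distrib, neg_add_eq_sub]

lemma abs_le_csup {d : ℕ} (a b : Fin d → ℝ) {g : (Fin d → ℝ) → ℝ} (hg : Continuous g)
    {y : Fin d → ℝ} (hy : y ∈ Set.univ.pi fun i => Set.Icc (a i) (b i)) :
    |g y| ≤ ⨆ z : (Set.univ.pi fun i => Set.Icc (a i) (b i) : Set (Fin d → ℝ)), |g z| := by
  have hcomp : IsCompact (Set.univ.pi fun i => Set.Icc (a i) (b i)) :=
    isCompact_univ_pi fun i => isCompact_Icc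
  have hbdd : BddAbove (Set.range fun z :
      (Set.univ.pi fun i => Set.Icc (a i) (b i) : Set (Fin d → ℝ)) => |g z|) := by
    have h2 := (hcomp.image hg.abs).bddAbove
    rw [Set.image_eq_range] at h2
    exact h2
  exact le_ciSup hbdd ⟨y, hy⟩

lemma left_mem_D {d : ℕ} (a b : Fin d → ℝ) (hab : ∀ i, a i < b i) :
    a ∈ Set.univ.pi fun i => Set.Icc (a i) (b i) := by
  intro i _
  exact ⟨le_refl _, (hab i).le⟩

lemma csup_nonneg {d : ℕ} (a b : Fin d → ℝ) (hab : ∀ i, a i < b i)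
    {g : (Fin d → ℝ) → ℝ} (hg : Continuous g) :
    0 ≤ ⨆ z : (Set.univ.pi fun i => Set.Icc (a i) (b i) : Set (Fin d → ℝ)), |g z| :=
  le_trans (abs_nonneg _) (abs_le_csup a b hg (left_mem_D a b hab))

lemma update_mem_D {d : ℕ} {a b : Fin d → ℝ} {y : Fin d → ℝ} {j : Fin d} {t : ℝ}
    (hy : y ∈ Set.univ.pi fun i => Set.Icc (a i) (b i)) (ht : t ∈ Set.Icc (a j) (b j)) :
    Function.update y j t ∈ Set.univ.pi fun i => Set.Icc (a i) (b i) := by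
  intro i _
  rw [Function.update_apply]
  by_cases h : i = j
  · subst h; simpa using ht
  · simpa [h] using hy i trivial

lemma core {d : ℕ} (a b : Fin d → ℝ) (hab : ∀ i, a i < b i) (l : List (Fin d)) :
    l.Nodup → ∀ f : (Fin d → ℝ) → ℝ, ContDiff ℝ (l.length : ℕ) f →
    ∀ c ∈ (Set.univ.pi fun i => Set.Icc (a i) (b i)),
    ∀ x ∈ (Set.univ.pi fun i => Set.Icc (a i) (b i)),
    |anchoredTerm f c l.toFinset x| ≤
      (⨆ y : (Set.univ.pi fun i => Set.Icc (a i) (b i) : Set (Fin d → ℝ)),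
        |listPartial l f y|) * ∏ i ∈ l.toFinset, (b i - a i) := by
  induction l using List.reverseRecOn with
  | nil =>
      intro _ f hf c hc x hx
      have : anchoredTerm f c ([] : List (Fin d)).toFinset x = f c := by
        simp [anchoredTerm]
      rw [this]
      simp only [List.toFinset_nil, Finset.prod_empty, mul_one]
      exact abs_le_csup a b (hf.continuous) hc
  | append_singleton l' j ih =>
      intro hnd f hf c hc x hx
      have hl' : l'.Nodup := hnd.of_append_left
      have hjl' : j ∉ l' := by
        intro h
        exact (List.disjoint_of_nodup_append hnd) h (by simp)
      have hlen : (l' ++ [j]).length = l'.length + 1 := by simp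
      have hf' : ContDiff ℝ ((l'.length + 1 : ℕ)) f := by rw [← hlen]; exact hf
      have hfinset : (l' ++ [j]).toFinset = insert j l'.toFinset := by
        rw [List.toFinset_append]
        ext k; simp [or_comm]
      have hjv' : j ∉ l'.toFinset := by simpa using hjl'
      set g : (Fin d → ℝ) → ℝ := fun y => fderiv ℝ f y (Pi.single j 1) with hg
      have hgsmooth : ContDiff ℝ (l'.length : ℕ) g := contDiff_step hf' j
      have hlp : listPartial (l' ++ [j]) f = listPartial l' g := by
        simp [listPartial, List.foldr_append]; rfl
      have hcontg : Continuous (listPartial l' g) := by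
        have : ContDiff ℝ ((0 : ℕ) : ℕ) (listPartial l' g) := by
          apply contDiff_listPartial
          simpa using hgsmooth
        exact this.continuous
      set M : ℝ := ⨆ y : (Set.univ.pi fun i => Set.Icc (a i) (b i) : Set (Fin d → ℝ)),
        |listPartial l' g y| with hM
      have hM0 : 0 ≤ M := csup_nonneg a b hab hcontg
      have hprod0 : 0 ≤ ∏ i ∈ l'.toFinset, (b i - a i) :=
        Finset.prod_nonneg fun i _ => by linarith [hab i]
      set F : ℝ → ℝ := fun t =>
        anchoredTerm (fun y => f (Function.update y j t)) c l'.toFinset x with hF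
      set F' : ℝ → ℝ := fun t =>
        anchoredTerm (fun y => g (Function.update y j t)) c l'.toFinset x with hF'
      have hder : ∀ t : ℝ, HasDerivAt F (F' t) t := by
        intro t
        have hterm : ∀ r ∈ l'.toFinset.powerset,
            HasDerivAt (fun s => (-1:ℝ) ^ (l'.toFinset.card - r.card) *
              f (Function.update (fun i => if i ∈ r then x i else c i) j s))
              ((-1:ℝ) ^ (l'.toFinset.card - r.card) *
              g (Function.update (fun i => if i ∈ r then x i else c i) j t)) t := by
          intro r _
          apply HasDerivAt.const_mul
          have h1 : HasDerivAt
              (Function.update (fun i => if i ∈ r then x i else c i) j)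
              (Pi.single j 1) t := hasDerivAt_update _ j t
          have h2 : HasFDerivAt f
              (fderiv ℝ f (Function.update (fun i => if i ∈ r then x i else c i) j t))
              (Function.update (fun i => if i ∈ r then x i else c i) j t) := by
            apply DifferentiableAt.hasFDerivAt
            apply (hf'.differentiable ?_).differentiableAt
            simp
          exact h2.comp_hasDerivAt t h1
        exact HasDerivAt.fun_sum hterm
      have hFval : anchoredTerm f c ((l' ++ [j]).toFinset) x = F (x j) - F (c j) := by
        rw [hfinset, anchoredTerm_insert f c x hjv']
      have hbound : ∀ t ∈ Set.Icc (a j) (b j),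
          |F' t| ≤ M * ∏ i ∈ l'.toFinset, (b i - a i) := by
        intro t ht
        have hgt : ContDiff ℝ (l'.length : ℕ) (fun y => g (Function.update y j t)) :=
          hgsmooth.comp ((contDiff_updateLeft j t).of_le le_top)
        refine (ih hl' (fun y => g (Function.update y j t)) hgt c hc x hx).trans ?_
        apply mul_le_mul_of_nonneg_right _ hprod0
        simp only [listPartial_update l' j t hjl' g hgsmooth]
        haveI : Nonempty ((Set.univ.pi fun i => Set.Icc (a i) (b i)) : Set (Fin d → ℝ)) :=
          ⟨⟨a, left_mem_D a b hab⟩⟩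
        apply ciSup_le
        rintro ⟨y, hy⟩
        exact abs_le_csup a b hcontg (update_mem_D hy ⟨ht.1, ht.2⟩)
      have hc_j : c j ∈ Set.Icc (a j) (b j) := by simpa using hc j trivial
      have hx_j : x j ∈ Set.Icc (a j) (b j) := by simpa using hx j trivial
      have hmvt : ‖F (x j) - F (c j)‖ ≤
          (M * ∏ i ∈ l'.toFinset, (b i - a i)) * ‖x j - c j‖ := by
        apply Convex.norm_image_sub_le_of_norm_hasDerivWithin_le
          (f' := F') (fun s hs => (hder s).hasDerivWithinAt)
          (fun s hs => by simpa [Real.norm_eq_abs] using hbound s hs)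
          (convex_Icc _ _) hc_j hx_j
      have habs : |x j - c j| ≤ b j - a j := by
        rw [abs_sub_le_iff]
        constructor <;> [linarith [hx_j.1, hx_j.2, hc_j.1, hc_j.2];
          linarith [hx_j.1, hx_j.2, hc_j.1, hc_j.2]]
      calc |anchoredTerm f c ((l' ++ [j]).toFinset) x|
          = ‖F (x j) - F (c j)‖ := by rw [hFval]; rfl
        _ ≤ (M * ∏ i ∈ l'.toFinset, (b i - a i)) * ‖x j - c j‖ := hmvt
        _ ≤ (M * ∏ i ∈ l'.toFinset, (b i - a i)) * (b j - a j) := by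
            apply mul_le_mul_of_nonneg_left _ (mul_nonneg hM0 hprod0)
            simpa [Real.norm_eq_abs] using habs
        _ = (⨆ y : (Set.univ.pi fun i => Set.Icc (a i) (b i) : Set (Fin d → ℝ)),
              |listPartial (l' ++ [j]) f y|) * ∏ i ∈ (l' ++ [j]).toFinset, (b i - a i) := by
            rw [hlp, hfinset, Finset.prod_insert hjv']
            ring

lemma anchoredTerm_update_anchor {d : ℕ} (f : (Fin d → ℝ) → ℝ) (c x : Fin d → ℝ)
    {j : Fin d} {u : Finset (Fin d)} (hj : j ∉ u) (s : ℝ) :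
    anchoredTerm (fun y => f (Function.update y j s)) c u x
      = anchoredTerm f (Function.update c j s) u x := by
  simp only [anchoredTerm]
  apply Finset.sum_congr rfl
  intro r hr
  have hjr : j ∉ r := fun h => hj (Finset.mem_powerset.mp hr h)
  congr 1
  congr 1
  funext i
  rw [Function.update_apply]
  by_cases h : i = j
  · subst h; simp [hjr]
  · simp [h, Function.update_apply]

lemma main_lemma {d : ℕ} (a b : Fin d → ℝ) (hab : ∀ i, a i < b i) :
    ∀ (n : ℕ) (u v : Finset (Fin d)), v ⊆ u → (u \ v).card = n →
    ∀ f : (Fin d → ℝ) → ℝ, ContDiff ℝ (v.card : ℕ) f →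
    ∀ c ∈ (Set.univ.pi fun i => Set.Icc (a i) (b i)),
    ∀ x ∈ (Set.univ.pi fun i => Set.Icc (a i) (b i)),
    |anchoredTerm f c u x| ≤
      2 ^ (u.card - v.card) *
        (⨆ y : (Set.univ.pi fun i => Set.Icc (a i) (b i) : Set (Fin d → ℝ)),
          |mixedPartial v f y|) * ∏ i ∈ v, (b i - a i) := by
  intro n
  induction n with
  | zero =>
      intro u v huv hcard f hf c hc x hx
      have huv' : u = v :=
        Finset.Subset.antisymm
          (Finset.sdiff_eq_empty_iff_subset.mp (Finset.card_eq_zero.mp hcard)) huv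
      subst huv'
      rw [Nat.sub_self, pow_zero, one_mul, mixedPartial_eq]
      have hlen : u.toList.length = u.card := Finset.length_toList u
      have hf2 : ContDiff ℝ (u.toList.length : ℕ) f := by rw [hlen]; exact hf
      have := core a b hab u.toList (Finset.nodup_toList u) f hf2 c hc x hx
      rwa [Finset.toList_toFinset] at this
  | succ n ihn =>
      intro u v huv hcard f hf c hc x hx
      have hne : (u \ v).Nonempty := Finset.card_pos.mp (by omega)
      obtain ⟨j, hj⟩ := hne
      have hju : j ∈ u := (Finset.mem_sdiff.mp hj).1
      have hjv : j ∉ v := (Finset.mem_sdiff.mp hj).2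
      have hju' : j ∉ u.erase j := Finset.notMem_erase j u
      have huu : u = insert j (u.erase j) := (Finset.insert_erase hju).symm
      have hvu' : v ⊆ u.erase j := fun i hi =>
        Finset.mem_erase.mpr ⟨fun h => hjv (h ▸ hi), huv hi⟩
      have hcard' : (u.erase j \ v).card = n := by
        have he : u.erase j \ v = (u \ v).erase j := by
          ext i
          simp only [Finset.mem_sdiff, Finset.mem_erase]
          tauto
        rw [he, Finset.card_erase_of_mem hj, hcard]
        omega
      have hx_j : x j ∈ Set.Icc (a j) (b j) := by simpa using hx j trivial
      have h1 := ihn (u.erase j) v hvu' hcard' f hf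
        (Function.update c j (x j)) (update_mem_D hc hx_j) x hx
      have h2 := ihn (u.erase j) v hvu' hcard' f hf c hc x hx
      have hexp : u.card - v.card = ((u.erase j).card - v.card) + 1 := by
        have h3 : (u.erase j).card = u.card - 1 := Finset.card_erase_of_mem hju
        have h5 : 1 ≤ u.card := Finset.card_pos.mpr ⟨j, hju⟩
        have h4 : v.card ≤ (u.erase j).card := Finset.card_le_card hvu'
        omega
      have key : anchoredTerm f c u x =
          anchoredTerm f (Function.update c j (x j)) (u.erase j) x
            - anchoredTerm f c (u.erase j) x := by
        conv_lhs => rw [huu]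
        rw [anchoredTerm_insert f c x hju', anchoredTerm_update_anchor f c x hju' (x j),
          anchoredTerm_update_anchor f c x hju' (c j), Function.update_eq_self]
      rw [key, hexp]
      calc |anchoredTerm f (Function.update c j (x j)) (u.erase j) x
            - anchoredTerm f c (u.erase j) x|
          ≤ |anchoredTerm f (Function.update c j (x j)) (u.erase j) x|
            + |anchoredTerm f c (u.erase j) x| := abs_sub _ _
        _ ≤ 2 ^ ((u.erase j).card - v.card) *
              (⨆ y : (Set.univ.pi fun i => Set.Icc (a i) (b i) : Set (Fin d → ℝ)),
                |mixedPartial v f y|) * ∏ i ∈ v, (b i - a i)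
            + 2 ^ ((u.erase j).card - v.card) *
              (⨆ y : (Set.univ.pi fun i => Set.Icc (a i) (b i) : Set (Fin d → ℝ)),
                |mixedPartial v f y|) * ∏ i ∈ v, (b i - a i) := add_le_add h1 h2
        _ = 2 ^ (((u.erase j).card - v.card) + 1) *
              (⨆ y : (Set.univ.pi fun i => Set.Icc (a i) (b i) : Set (Fin d → ℝ)),
                |mixedPartial v f y|) * ∏ i ∈ v, (b i - a i) := by
            rw [pow_succ]; ring

/-- for `v ⊆ u` and `f` which is `|v|` times continuously
differentiable, the anchored term satisfies
`‖f_{u,c}‖_∞ ≤ 2^{|u|−|v|} ‖∂_v f‖_∞ vol(D_v)` on `D = ∏ [a i, b i]`. -/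
theorem statement_4 {d : ℕ} (a b : Fin d → ℝ) (hab : ∀ i, a i < b i)
    (u v : Finset (Fin d)) (hvu : v ⊆ u)
    (f : (Fin d → ℝ) → ℝ) (hf : ContDiff ℝ v.card f) :
    ∀ c ∈ Set.univ.pi fun i => Set.Icc (a i) (b i),
      ∀ x ∈ Set.univ.pi fun i => Set.Icc (a i) (b i),
        |anchoredTerm f c u x| ≤
          2 ^ (u.card - v.card) *
            (⨆ y : (Set.univ.pi fun i => Set.Icc (a i) (b i) : Set (Fin d → ℝ)),
              |mixedPartial v f y|) *
            ∏ i ∈ v, (b i - a i) := by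
  intro c hc x hx
  exact main_lemma a b hab (u \ v).card u v hvu rfl f hf c hc x hx
end

section
/- Let D = ∏_{i=1}^d [a_i, b_i] ⊂ ℝ^d with a_i < b_i, let v ⊆ u ⊆ {1,…,d}, and let f : D → ℝ be |v| times continuously differentiable (so that ∂_v f := ∂^{|v|} f / ∏_{i∈v} ∂x_i exists and is continuous). Then the ANOVA term satisfies the sup-norm bound ‖f_{u,A}‖_∞ ≤ 2^{|u|−|v|} · ‖∂_v f‖_∞ · vol(D_v), where vol(D_v) = ∏_{i∈v} (b_i − a_i) and ‖·‖_∞ is the supremum norm over D. -/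
open MeasureTheory

/-- The ANOVA decomposition term
`f_{u,A}(x) = Σ_{v ⊆ u} (−1)^{|u|−|v|} (1/vol(D_{vᶜ})) ∫_{D_{vᶜ}} f(x^{v,s}) ds`. -/
noncomputable def anovaTerm {d : ℕ} (a b : Fin d → ℝ) (f : (Fin d → ℝ) → ℝ)
    (u : Finset (Fin d)) (x : Fin d → ℝ) : ℝ :=
  ∑ v ∈ u.powerset, (-1 : ℝ) ^ (u.card - v.card) *
    ((∏ i ∈ vᶜ, (b i - a i))⁻¹ *
      ∫ s : {i : Fin d // i ∉ v} → ℝ in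
          Set.univ.pi (fun i : {i : Fin d // i ∉ v} => Set.Icc (a i.1) (b i.1)),
        f (fun i => if h : i ∈ v then x i else s ⟨i, h⟩))

section aux
variable {d : ℕ}

noncomputable def mpList (l : List (Fin d)) (f : (Fin d → ℝ) → ℝ) : (Fin d → ℝ) → ℝ :=
  l.foldr (fun i g => fun x => fderiv ℝ g x (Pi.single i 1)) f

lemma mpList_nil (f : (Fin d → ℝ) → ℝ) : mpList ([] : List (Fin d)) f = f := rfl

lemma mpList_cons (i : Fin d) (l : List (Fin d)) (f : (Fin d → ℝ) → ℝ) :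
    mpList (i :: l) f = fun x => fderiv ℝ (mpList l f) x (Pi.single i 1) := rfl

lemma mpList_append (l₁ l₂ : List (Fin d)) (f : (Fin d → ℝ) → ℝ) :
    mpList (l₁ ++ l₂) f = mpList l₁ (mpList l₂ f) := by
  simp [mpList, List.foldr_append]

lemma contDiff_deriv_single {n : ℕ} {g : (Fin d → ℝ) → ℝ} (hg : ContDiff ℝ ((n+1 : ℕ)) g)
    (i : Fin d) : ContDiff ℝ (n : ℕ) (fun x => fderiv ℝ g x (Pi.single i 1)) := by
  have h : ContDiff ℝ (n : ℕ) (fderiv ℝ g) := hg.fderiv_right (by exact_mod_cast le_refl (n+1 : ℕ))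
  exact h.clm_apply contDiff_const

lemma contDiff_mpList {n : ℕ} (l : List (Fin d)) {f : (Fin d → ℝ) → ℝ}
    (hf : ContDiff ℝ ((l.length + n : ℕ)) f) : ContDiff ℝ (n : ℕ) (mpList l f) := by
  induction l generalizing n with
  | nil => simpa [mpList_nil] using hf
  | cons i l ih =>
    rw [mpList_cons]
    refine contDiff_deriv_single (ih (n := n+1) ?_) i
    have e : l.length + (n + 1) = (i :: l).length + n := by simp; omega
    rw [e]; exact hf

noncomputable def updL (j : Fin d) : (Fin d → ℝ) →L[ℝ] (Fin d → ℝ) :=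
  ContinuousLinearMap.pi (fun i => if i = j then 0 else ContinuousLinearMap.proj i)

lemma updL_apply (j : Fin d) (y : Fin d → ℝ) : updL j y = Function.update y j 0 := by
  funext i
  by_cases h : i = j <;> simp [updL, h, Function.update_apply]

lemma hasFDerivAt_updateAt (j : Fin d) (c : ℝ) (y : Fin d → ℝ) :
    HasFDerivAt (fun z : Fin d → ℝ => Function.update z j c) (updL j) y := by
  have heq : (fun z : Fin d → ℝ => Function.update z j c)
      = fun z => updL j z + Pi.single j c := by
    funext z i
    by_cases h : i = j <;>
      simp [updL_apply, Function.update_apply, h, Pi.single_apply]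
  rw [heq]
  exact (updL j).hasFDerivAt.add_const _

lemma fderiv_comp_update {g : (Fin d → ℝ) → ℝ} {j : Fin d} {c : ℝ} {x : Fin d → ℝ}
    (hg : DifferentiableAt ℝ g (Function.update x j c)) {i : Fin d} (hij : i ≠ j) :
    fderiv ℝ (fun y => g (Function.update y j c)) x (Pi.single i 1)
      = fderiv ℝ g (Function.update x j c) (Pi.single i 1) := by
  have h := (hg.hasFDerivAt.comp x (hasFDerivAt_updateAt j c x)).fderiv
  rw [show (g ∘ fun z => Function.update z j c) = (fun y => g (Function.update y j c)) from rfl]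
    at h
  rw [h]
  simp only [ContinuousLinearMap.coe_comp', Function.comp_apply]
  congr 1
  rw [updL_apply]
  funext k
  by_cases hk : k = j
  · subst hk
    simp [Function.update_self, Pi.single_eq_of_ne (Ne.symm hij)]
  · simp [Function.update_apply, hk]

lemma contDiff_update_map {n : ℕ} (j : Fin d) (c : ℝ) :
    ContDiff ℝ (n : ℕ) (fun y : Fin d → ℝ => Function.update y j c) := by
  apply contDiff_pi.2
  intro i
  by_cases h : i = j
  · subst h; simpa using contDiff_const (c := c)
  · have : (fun y : Fin d → ℝ => Function.update y j c i) = fun y => y i := by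
      funext y; simp [Function.update_apply, h]
    rw [this]; exact contDiff_apply ℝ ℝ i

lemma mpList_comp_update (l : List (Fin d)) {f : (Fin d → ℝ) → ℝ} {j : Fin d} (hj : j ∉ l)
    (hf : ContDiff ℝ ((l.length : ℕ)) f) (c : ℝ) :
    mpList l (fun y => f (Function.update y j c))
      = fun x => mpList l f (Function.update x j c) := by
  induction l with
  | nil => rfl
  | cons i l ih =>
    simp only [List.mem_cons, not_or] at hj
    obtain ⟨hji, hjl⟩ := hj
    have hfl : ContDiff ℝ ((l.length : ℕ)) f := by
      refine hf.of_le ?_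
      have e : ((i :: l).length : ℕ) = l.length + 1 := by simp
      rw [e]
      exact_mod_cast Nat.le_succ l.length
    funext x
    rw [mpList_cons, ih hjl hfl, mpList_cons]
    have hdiff : DifferentiableAt ℝ (mpList l f) (Function.update x j c) := by
      have h1 : ContDiff ℝ (1 : ℕ) (mpList l f) := by
        apply contDiff_mpList l
        have e : l.length + 1 = (i :: l).length := by simp
        rw [e]; exact hf
      exact (h1.differentiable (by norm_num)).differentiableAt
    exact fderiv_comp_update hdiff (fun h => hji (h ▸ rfl))

end aux
section diff
variable {d : ℕ}

noncomputable def mdiffL (x t : Fin d → ℝ) : List (Fin d) → ((Fin d → ℝ) → ℝ) → ℝ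
  | [], f => f t
  | j :: l, f => mdiffL x t l (fun y => f (Function.update y j (x j))) - mdiffL x t l f

lemma mdiffL_eq_sum (x t : Fin d → ℝ) :
    ∀ (l : List (Fin d)), l.Nodup → ∀ (f : (Fin d → ℝ) → ℝ),
    mdiffL x t l f = ∑ w ∈ l.toFinset.powerset, (-1 : ℝ) ^ (l.length - w.card) *
      f (fun i => if i ∈ w then x i else t i) := by
  intro l
  induction l with
  | nil =>
    intro _ f
    simp only [mdiffL, List.toFinset_nil, Finset.powerset_empty, Finset.sum_singleton]
    simp
  | cons j l ih =>
    intro hl f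
    obtain ⟨hjl, hl'⟩ := List.nodup_cons.1 hl
    have hjf : j ∉ l.toFinset := by simpa using hjl
    show mdiffL x t l (fun y => f (Function.update y j (x j))) - mdiffL x t l f = _
    rw [ih hl', ih hl', List.toFinset_cons, Finset.sum_powerset_insert hjf]
    have hcard : ∀ w ∈ l.toFinset.powerset, w.card ≤ l.length := by
      intro w hw
      calc w.card ≤ l.toFinset.card := Finset.card_le_card (Finset.mem_powerset.1 hw)
        _ ≤ l.length := l.toFinset_card_le
    have e1 : ∀ w ∈ l.toFinset.powerset,
        (-1 : ℝ) ^ (l.length - w.card) *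
          (fun y => f (Function.update y j (x j))) (fun i => if i ∈ w then x i else t i)
        = (-1 : ℝ) ^ ((j :: l).length - (insert j w).card) *
          f (fun i => if i ∈ insert j w then x i else t i) := by
      intro w hw
      have hjw : j ∉ w := fun h => hjf (Finset.mem_powerset.1 hw h)
      have hc : (insert j w).card = w.card + 1 := Finset.card_insert_of_notMem hjw
      have hexp : (j :: l).length - (insert j w).card = l.length - w.card := by
        simp [hc]
      rw [hexp]
      have hpt : Function.update (fun i => if i ∈ w then x i else t i) j (x j)
          = fun i => if i ∈ insert j w then x i else t i := by
        funext i
        by_cases hi : i = j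
        · subst hi; simp [hjw]
        · simp [Function.update_apply, hi, Finset.mem_insert]
      show (-1:ℝ) ^ (l.length - w.card) *
          f (Function.update (fun i => if i ∈ w then x i else t i) j (x j)) = _
      rw [hpt]
    have e2 : ∀ w ∈ l.toFinset.powerset,
        (-1 : ℝ) ^ ((j :: l).length - w.card)
        = -((-1 : ℝ) ^ (l.length - w.card)) := by
      intro w hw
      have : (j :: l).length - w.card = (l.length - w.card) + 1 := by
        have := hcard w hw; simp [List.length_cons]; omega
      rw [this, pow_succ]
      ring
    rw [Finset.sum_congr rfl e1]
    have : ∑ w ∈ l.toFinset.powerset, (-1 : ℝ) ^ ((j :: l).length - w.card) *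
          f (fun i => if i ∈ w then x i else t i)
        = -∑ w ∈ l.toFinset.powerset, (-1 : ℝ) ^ (l.length - w.card) *
          f (fun i => if i ∈ w then x i else t i) := by
      rw [← Finset.sum_neg_distrib]
      refine Finset.sum_congr rfl fun w hw => ?_
      rw [e2 w hw]; ring
    rw [this]
    ring

end diff
section boxsec
variable {d : ℕ}

def box (a b : Fin d → ℝ) : Set (Fin d → ℝ) := Set.univ.pi fun i => Set.Icc (a i) (b i)

lemma box_nonempty {a b : Fin d → ℝ} (hab : ∀ i, a i < b i) : (box a b).Nonempty :=
  ⟨a, fun i _ => ⟨le_refl _, (hab i).le⟩⟩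

lemma isCompact_box (a b : Fin d → ℝ) : IsCompact (box a b) :=
  isCompact_univ_pi fun _ => isCompact_Icc

lemma bddAbove_box (a b : Fin d → ℝ) {g : (Fin d → ℝ) → ℝ} (hg : Continuous g) :
    BddAbove (Set.range fun y : (box a b) => |g y|) := by
  have h := ((isCompact_box a b).image (continuous_abs.comp hg)).bddAbove
  rwa [Set.image_eq_range] at h

lemma update_mem_box {a b : Fin d → ℝ} {y : Fin d → ℝ} (hy : y ∈ box a b) {j : Fin d} {c : ℝ}
    (hc : c ∈ Set.Icc (a j) (b j)) : Function.update y j c ∈ box a b := by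
  intro i _
  by_cases h : i = j
  · subst h; simpa using hc
  · simpa [Function.update_apply, h] using hy i (Set.mem_univ i)

lemma combine_mem_box {a b : Fin d → ℝ} {x t : Fin d → ℝ} (hx : x ∈ box a b) (ht : t ∈ box a b)
    (w : Finset (Fin d)) : (fun i => if i ∈ w then x i else t i) ∈ box a b := by
  intro i _
  by_cases h : i ∈ w
  · simpa [h] using hx i (Set.mem_univ i)
  · simpa [h] using ht i (Set.mem_univ i)

lemma ciSup_abs_nonneg {a b : Fin d → ℝ} (hab : ∀ i, a i < b i) (g : (Fin d → ℝ) → ℝ) :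
    0 ≤ ⨆ y : (box a b), |g y| := by
  exact Real.iSup_nonneg fun y => abs_nonneg _

lemma list_prod_nonneg {a b : Fin d → ℝ} (hab : ∀ i, a i < b i) (l : List (Fin d)) :
    0 ≤ (l.map fun i => b i - a i).prod := by
  induction l with
  | nil => simp
  | cons j l ih =>
    simp only [List.map_cons, List.prod_cons]
    exact mul_nonneg (by linarith [hab j]) ih

/-- Core bound: mixed finite difference over list `l` bounded by sup of `mpList l.reverse f`
times product of lengths. -/
lemma mdiffL_bound (a b : Fin d → ℝ) (hab : ∀ i, a i < b i) :
    ∀ (l : List (Fin d)), l.Nodup → ∀ (f : (Fin d → ℝ) → ℝ), ContDiff ℝ ((l.length : ℕ)) f →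
    ∀ x ∈ box a b, ∀ t ∈ box a b,
      |mdiffL x t l f| ≤ (⨆ y : (box a b), |mpList l.reverse f y|) *
        (l.map fun i => b i - a i).prod := by
  have hbox : (box a b).Nonempty := box_nonempty hab
  have : Nonempty (box a b) := hbox.to_subtype
  intro l
  induction l with
  | nil =>
    intro _ f hf x hx t ht
    simp only [mdiffL, List.reverse_nil, mpList_nil, List.map_nil, List.prod_nil, mul_one]
    exact le_ciSup (bddAbove_box a b (hf.continuous)) (⟨t, ht⟩ : box a b)
  | cons j l ih =>
    intro hl f hf x hx t ht
    obtain ⟨hjl, hl'⟩ := List.nodup_cons.1 hl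
    have hjf : j ∉ l.toFinset := by simpa using hjl
    have hf' : ContDiff ℝ ((l.length : ℕ)) f := by
      refine hf.of_le ?_
      have e : ((j :: l).length : ℕ) = l.length + 1 := by simp
      rw [e]; exact_mod_cast Nat.le_succ l.length
    have hf1 : Differentiable ℝ f := by
      have : (1 : WithTop ℕ∞) ≤ ((j :: l).length : ℕ) := by
        have : 1 ≤ (j :: l).length := by simp
        exact_mod_cast this
      exact hf.differentiable (lt_of_lt_of_le zero_lt_one this).ne'
    -- the one-variable function
    set F : ℝ → ℝ := fun c => ∑ w ∈ l.toFinset.powerset, (-1 : ℝ) ^ (l.length - w.card) *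
      f (Function.update (fun i => if i ∈ w then x i else t i) j c) with hF
    -- its derivative
    set F' : ℝ → ℝ := fun c => ∑ w ∈ l.toFinset.powerset, (-1 : ℝ) ^ (l.length - w.card) *
      fderiv ℝ f (Function.update (fun i => if i ∈ w then x i else t i) j c)
        (Pi.single j 1) with hF'
    have hderiv : ∀ c : ℝ, HasDerivAt F (F' c) c := by
      intro c
      refine HasDerivAt.fun_sum fun w _ => ?_
      refine HasDerivAt.const_mul _ ?_
      set p : Fin d → ℝ := fun i => if i ∈ w then x i else t i with hp
      have h1 : HasDerivAt (fun c : ℝ => Function.update p j c) (Pi.single j 1) c := by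
        have heq : (fun c : ℝ => Function.update p j c)
            = fun c : ℝ => Function.update p j 0 + c • (Pi.single j 1 : Fin d → ℝ) := by
          funext c i
          by_cases h : i = j
          · subst h; simp
          · simp [Function.update_apply, h, Pi.single_apply]
        rw [heq]
        have h2 : HasDerivAt (fun c : ℝ => c • (Pi.single j 1 : Fin d → ℝ))
            (Pi.single j 1) c := by
          simpa using (hasDerivAt_id c).smul_const (Pi.single j 1 : Fin d → ℝ)
        exact h2.const_add (Function.update p j 0)
      exact ((hf1 _).hasFDerivAt.comp_hasDerivAt c h1)
    -- mdiffL equals difference of F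
    have hsplit : mdiffL x t (j :: l) f = F (x j) - F (t j) := by
      show mdiffL x t l (fun y => f (Function.update y j (x j))) - mdiffL x t l f = _
      rw [mdiffL_eq_sum x t l hl', mdiffL_eq_sum x t l hl']
      congr 1
      refine Finset.sum_congr rfl fun w hw => ?_
      have hjw : j ∉ w := fun h => hjf (Finset.mem_powerset.1 hw h)
      have hupd : Function.update (fun i => if i ∈ w then x i else t i) j (t j)
          = fun i => if i ∈ w then x i else t i := by
        funext i
        by_cases h : i = j
        · subst h; simp [hjw]
        · simp [Function.update_apply, h]
      rw [hupd]
    -- bound on F'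
    set C₀ : ℝ := (⨆ y : (box a b), |mpList (l.reverse ++ [j]) f y|) *
      (l.map fun i => b i - a i).prod with hC₀
    have hC₀nn : 0 ≤ C₀ :=
      mul_nonneg (ciSup_abs_nonneg hab _) (list_prod_nonneg hab l)
    have hbnd : ∀ c ∈ Set.Icc (a j) (b j), |F' c| ≤ C₀ := by
      intro c hc
      set g : (Fin d → ℝ) → ℝ :=
        fun y => fderiv ℝ f (Function.update y j c) (Pi.single j 1) with hg
      have hgc : ContDiff ℝ ((l.length : ℕ)) g := by
        have hdf : ContDiff ℝ ((l.length : ℕ))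
            (fun y => fderiv ℝ f y (Pi.single j 1)) := by
          refine contDiff_deriv_single ?_ j
          have e : ((l.length + 1 : ℕ)) = ((j :: l).length : ℕ) := by simp
          rw [e]; exact hf
        exact hdf.comp (contDiff_update_map j c)
      have hFg : F' c = mdiffL x t l g := by
        rw [mdiffL_eq_sum x t l hl' g]
      rw [hFg]
      have hIH := ih hl' g hgc x hx t ht
      refine le_trans hIH ?_
      refine mul_le_mul_of_nonneg_right ?_ (list_prod_nonneg hab l)
      -- rewrite mpList l.reverse g
      have hjrev : j ∉ l.reverse := by simpa using hjl
      have hdf : ContDiff ℝ ((l.reverse.length : ℕ))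
          (fun y => fderiv ℝ f y (Pi.single j 1)) := by
        rw [List.length_reverse]
        refine contDiff_deriv_single ?_ j
        have e : ((l.length + 1 : ℕ)) = ((j :: l).length : ℕ) := by simp
        rw [e]; exact hf
      have hcomm := mpList_comp_update l.reverse (f := fun y => fderiv ℝ f y (Pi.single j 1))
        hjrev hdf c
      have hgg : mpList l.reverse g
          = fun y => mpList (l.reverse ++ [j]) f (Function.update y j c) := by
        rw [mpList_append]
        exact hcomm
      rw [hgg]
      -- sup over updated points ≤ sup over box
      have hcont : Continuous (mpList (l.reverse ++ [j]) f) := by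
        have hlen : ((l.reverse ++ [j]).length + 0 : ℕ) = ((j :: l).length : ℕ) := by simp
        have := contDiff_mpList (n := 0) (l.reverse ++ [j]) (f := f) (by rw [hlen]; exact hf)
        exact this.continuous
      refine ciSup_le fun y => ?_
      have hmem : Function.update (y : Fin d → ℝ) j c ∈ box a b :=
        update_mem_box y.2 hc
      exact le_ciSup (bddAbove_box a b hcont) (⟨_, hmem⟩ : box a b)
    -- MVT
    have hxj : x j ∈ Set.Icc (a j) (b j) := hx j (Set.mem_univ j)
    have htj : t j ∈ Set.Icc (a j) (b j) := ht j (Set.mem_univ j)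
    have hmvt : ‖F (x j) - F (t j)‖ ≤ C₀ * ‖x j - t j‖ := by
      refine Convex.norm_image_sub_le_of_norm_hasDerivWithin_le
        (f := F) (f' := F') (s := Set.Icc (a j) (b j)) (C := C₀)
        (fun c hc => (hderiv c).hasDerivWithinAt) ?_ (convex_Icc _ _) htj hxj
      intro c hc
      simpa using hbnd c hc
    have habs : ‖x j - t j‖ ≤ b j - a j := by
      rw [Real.norm_eq_abs, abs_sub_le_iff]
      constructor <;> [linarith [hxj.1, hxj.2, htj.1, htj.2]; linarith [hxj.1, hxj.2, htj.1, htj.2]]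
    calc |mdiffL x t (j :: l) f| = ‖F (x j) - F (t j)‖ := by rw [hsplit]; rfl
      _ ≤ C₀ * ‖x j - t j‖ := hmvt
      _ ≤ C₀ * (b j - a j) := mul_le_mul_of_nonneg_left habs hC₀nn
      _ = (⨆ y : (box a b), |mpList (j :: l).reverse f y|) *
          ((j :: l).map fun i => b i - a i).prod := by
        rw [List.reverse_cons]
        simp only [List.map_cons, List.prod_cons, hC₀]
        ring

end boxsec
section peel
variable {d : ℕ}

lemma mdiffL_peel (a b : Fin d → ℝ) (hab : ∀ i, a i < b i) (v : Finset (Fin d)) :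
    ∀ (l : List (Fin d)), (l ++ v.toList.reverse).Nodup →
    ∀ (f : (Fin d → ℝ) → ℝ), ContDiff ℝ ((v.card : ℕ)) f →
    ∀ x ∈ box a b, ∀ t ∈ box a b,
      |mdiffL x t (l ++ v.toList.reverse) f| ≤
        2 ^ l.length * (⨆ y : (box a b), |mpList v.toList f y|) * ∏ i ∈ v, (b i - a i) := by
  have hbox : (box a b).Nonempty := box_nonempty hab
  have : Nonempty (box a b) := hbox.to_subtype
  intro l
  induction l with
  | nil =>
    intro hnd f hf x hx t ht
    simp only [List.nil_append] at hnd ⊢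
    have hlen : (v.toList.reverse.length : ℕ) = (v.card : ℕ) := by
      simp [Finset.length_toList]
    have hb := mdiffL_bound a b hab v.toList.reverse hnd f (by rw [hlen]; exact hf) x hx t ht
    rw [List.reverse_reverse] at hb
    have hprod : (v.toList.reverse.map fun i => b i - a i).prod = ∏ i ∈ v, (b i - a i) := by
      rw [List.map_reverse, List.prod_reverse]
      exact Finset.prod_map_toList v fun i => b i - a i
    rw [hprod] at hb
    simpa using hb
  | cons j l ih =>
    intro hnd f hf x hx t ht
    rw [List.cons_append] at hnd ⊢
    obtain ⟨hjl, hnd'⟩ := List.nodup_cons.1 hnd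
    have hjv : j ∉ v.toList := by
      intro h
      exact hjl (List.mem_append.2 (Or.inr (List.mem_reverse.2 h)))
    have hxj : x j ∈ Set.Icc (a j) (b j) := hx j (Set.mem_univ j)
    -- bound each piece
    have hcomp : ContDiff ℝ ((v.card : ℕ)) (fun y => f (Function.update y j (x j))) :=
      hf.comp (contDiff_update_map j (x j))
    have hsup : (⨆ y : (box a b), |mpList v.toList (fun y => f (Function.update y j (x j))) y|)
        ≤ ⨆ y : (box a b), |mpList v.toList f y| := by
      have hlen : (v.toList.length : ℕ) = (v.card : ℕ) := by simp [Finset.length_toList]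
      have hcomm := mpList_comp_update v.toList (f := f) hjv (by rw [hlen]; exact hf) (x j)
      rw [hcomm]
      have hcont : Continuous (mpList v.toList f) := by
        have := contDiff_mpList (n := 0) v.toList (f := f)
          (by rw [show (v.toList.length + 0 : ℕ) = (v.card : ℕ) by simp [Finset.length_toList]]
              exact hf)
        exact this.continuous
      refine ciSup_le fun y => ?_
      exact le_ciSup (bddAbove_box a b hcont) (⟨_, update_mem_box y.2 hxj⟩ : box a b)
    have h1 := ih hnd' (fun y => f (Function.update y j (x j))) hcomp x hx t ht
    have h2 := ih hnd' f hf x hx t ht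
    have hM : 0 ≤ (⨆ y : (box a b), |mpList v.toList f y|) * ∏ i ∈ v, (b i - a i) := by
      refine mul_nonneg (ciSup_abs_nonneg hab _) (Finset.prod_nonneg fun i _ => ?_)
      linarith [hab i]
    have hP : (0:ℝ) ≤ ∏ i ∈ v, (b i - a i) :=
      Finset.prod_nonneg fun i _ => by linarith [hab i]
    calc |mdiffL x t (j :: (l ++ v.toList.reverse)) f|
        = |mdiffL x t (l ++ v.toList.reverse) (fun y => f (Function.update y j (x j)))
            - mdiffL x t (l ++ v.toList.reverse) f| := rfl
      _ ≤ |mdiffL x t (l ++ v.toList.reverse) (fun y => f (Function.update y j (x j)))|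
            + |mdiffL x t (l ++ v.toList.reverse) f| := abs_sub _ _
      _ ≤ 2 ^ l.length * (⨆ y : (box a b),
              |mpList v.toList (fun y => f (Function.update y j (x j))) y|) *
              ∏ i ∈ v, (b i - a i)
            + 2 ^ l.length * (⨆ y : (box a b), |mpList v.toList f y|) *
              ∏ i ∈ v, (b i - a i) := add_le_add h1 h2
      _ ≤ 2 ^ l.length * (⨆ y : (box a b), |mpList v.toList f y|) * ∏ i ∈ v, (b i - a i)
            + 2 ^ l.length * (⨆ y : (box a b), |mpList v.toList f y|) *
              ∏ i ∈ v, (b i - a i) := by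
          refine add_le_add_left ?_ _
          refine mul_le_mul_of_nonneg_right (mul_le_mul_of_nonneg_left hsup (by positivity)) hP
      _ = 2 ^ (j :: l).length * (⨆ y : (box a b), |mpList v.toList f y|) *
            ∏ i ∈ v, (b i - a i) := by
          simp only [List.length_cons, pow_succ]
          ring

end peel
section intpart
variable {d : ℕ}

lemma continuous_combine {f : (Fin d → ℝ) → ℝ} (hf : Continuous f) (x : Fin d → ℝ)
    (w : Finset (Fin d)) :
    Continuous (fun t : Fin d → ℝ => f fun i => if i ∈ w then x i else t i) := by
  refine hf.comp (continuous_pi fun i => ?_)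
  by_cases h : i ∈ w
  · simpa [h] using continuous_const
  · simpa [h] using continuous_apply i

lemma avg_eq (a b : Fin d → ℝ) (hab : ∀ i, a i < b i) (f : (Fin d → ℝ) → ℝ)
    (hf : Continuous f) (w : Finset (Fin d)) (x : Fin d → ℝ) :
    (∏ i ∈ wᶜ, (b i - a i))⁻¹ *
      ∫ s : {i : Fin d // i ∉ w} → ℝ in
          Set.univ.pi (fun i : {i : Fin d // i ∉ w} => Set.Icc (a i.1) (b i.1)),
        f (fun i => if h : i ∈ w then x i else s ⟨i, h⟩)
    = (∏ i, (b i - a i))⁻¹ *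
        ∫ t in box a b, f (fun i => if i ∈ w then x i else t i) := by
  classical
  letI : Fintype {i : Fin d // i ∈ w} := Subtype.fintype fun i => i ∈ w
  have hmp := MeasureTheory.volume_preserving_piEquivPiSubtypeProd (fun _ : Fin d => ℝ)
    (fun i => i ∈ w)
  let e := MeasurableEquiv.piEquivPiSubtypeProd (fun _ : Fin d => ℝ) (fun i => i ∈ w)
  let S₁ : Set ({i : Fin d // i ∈ w} → ℝ) := Set.univ.pi fun i => Set.Icc (a i.1) (b i.1)
  let S₂ : Set ({i : Fin d // ¬ i ∈ w} → ℝ) := Set.univ.pi fun i => Set.Icc (a i.1) (b i.1)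
  let G : (({i : Fin d // i ∈ w} → ℝ) × ({i : Fin d // ¬ i ∈ w} → ℝ)) → ℝ :=
    fun z => f (fun i => if h : i ∈ w then x i else z.2 ⟨i, h⟩)
  have hGcont : Continuous G := by
    refine hf.comp (continuous_pi fun i => ?_)
    by_cases h : i ∈ w
    · simpa [h] using continuous_const
    · simp only [h, dif_neg, not_false_iff]
      exact (continuous_apply (⟨i, h⟩ : {i : Fin d // ¬ i ∈ w})).comp continuous_snd
  have hbox : box a b = ⇑e ⁻¹' (S₁ ×ˢ S₂) := by
    ext t
    simp only [Set.mem_preimage, Set.mem_prod, S₁, S₂, Set.mem_pi, Set.mem_univ,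
      forall_true_left, box, e, MeasurableEquiv.piEquivPiSubtypeProd,
      MeasurableEquiv.coe_mk, Equiv.piEquivPiSubtypeProd, Equiv.coe_fn_mk]
    constructor
    · intro h
      exact ⟨fun i => h i.1, fun i => h i.1⟩
    · intro h i
      by_cases hi : i ∈ w
      · exact h.1 ⟨i, hi⟩
      · exact h.2 ⟨i, hi⟩
  have hGe : (fun t : Fin d → ℝ => f (fun i => if i ∈ w then x i else t i))
      = fun t => G (e t) := by
    funext t
    simp only [G, e, MeasurableEquiv.piEquivPiSubtypeProd, MeasurableEquiv.coe_mk,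
      Equiv.piEquivPiSubtypeProd, Equiv.coe_fn_mk]
    have hpt : (fun i => if i ∈ w then x i else t i)
        = (fun i => if h : i ∈ w then x i else t i) := by
      funext i
      by_cases h : i ∈ w <;> simp [h]
    rw [hpt]
  have step1 : ∫ t in box a b, f (fun i => if i ∈ w then x i else t i)
      = ∫ z in S₁ ×ˢ S₂, G z := by
    rw [hGe, hbox]
    exact hmp.setIntegral_preimage_emb e.measurableEmbedding G (S₁ ×ˢ S₂)
  have hS₁c : IsCompact S₁ := isCompact_univ_pi fun _ => isCompact_Icc
  have hS₂c : IsCompact S₂ := isCompact_univ_pi fun _ => isCompact_Icc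
  have hint : IntegrableOn G (S₁ ×ˢ S₂) (volume.prod volume) := by
    rw [← Measure.volume_eq_prod]
    exact hGcont.continuousOn.integrableOn_compact (hS₁c.prod hS₂c)
  have step2 : ∫ z in S₁ ×ˢ S₂, G z
      = (volume S₁).toReal • ∫ s : {i : Fin d // i ∉ w} → ℝ in
          Set.univ.pi (fun i : {i : Fin d // i ∉ w} => Set.Icc (a i.1) (b i.1)),
        f (fun i => if h : i ∈ w then x i else s ⟨i, h⟩) := by
    calc ∫ z in S₁ ×ˢ S₂, G z = ∫ z in S₁ ×ˢ S₂, G z ∂(volume.prod volume) := by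
          rw [← Measure.volume_eq_prod]
      _ = ∫ y in S₁, ∫ s in S₂, G (y, s) := MeasureTheory.setIntegral_prod G hint
      _ = ∫ _ in S₁, ∫ s : {i : Fin d // i ∉ w} → ℝ in
            Set.univ.pi (fun i : {i : Fin d // i ∉ w} => Set.Icc (a i.1) (b i.1)),
          f (fun i => if h : i ∈ w then x i else s ⟨i, h⟩) := rfl
      _ = _ := setIntegral_const _
  have hvol1 : (volume S₁).toReal = ∏ i ∈ w, (b i - a i) := by
    have : volume S₁ = ∏ i : {i : Fin d // i ∈ w}, volume (Set.Icc (a i.1) (b i.1)) :=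
      volume_pi_pi _
    rw [this]
    rw [ENNReal.toReal_prod]
    rw [Finset.prod_subtype w (fun i => Iff.rfl) (fun i => b i - a i)]
    refine Finset.prod_congr rfl fun i _ => ?_
    rw [Real.volume_Icc, ENNReal.toReal_ofReal (by linarith [hab i.1])]
  have hw : (0:ℝ) < ∏ i ∈ w, (b i - a i) :=
    Finset.prod_pos fun i _ => sub_pos.2 (hab i)
  have hwc : (0:ℝ) < ∏ i ∈ wᶜ, (b i - a i) :=
    Finset.prod_pos fun i _ => sub_pos.2 (hab i)
  rw [step1, step2, hvol1, ← Finset.prod_mul_prod_compl w (fun i => b i - a i)]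
  rw [smul_eq_mul]
  field_simp

end intpart
section final
variable {d : ℕ}

lemma box_volume (a b : Fin d → ℝ) (hab : ∀ i, a i < b i) :
    (volume (box a b)).toReal = ∏ i, (b i - a i) := by
  rw [show box a b = Set.univ.pi fun i => Set.Icc (a i) (b i) from rfl]
  rw [volume_pi_pi]
  rw [ENNReal.toReal_prod]
  refine Finset.prod_congr rfl fun i _ => ?_
  rw [Real.volume_Icc, ENNReal.toReal_ofReal (by linarith [hab i])]

lemma anova_eq (a b : Fin d → ℝ) (hab : ∀ i, a i < b i) (f : (Fin d → ℝ) → ℝ)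
    (hf : Continuous f) (u : Finset (Fin d)) (x : Fin d → ℝ) :
    anovaTerm a b f u x = (∏ i, (b i - a i))⁻¹ *
      ∫ t in box a b, ∑ w ∈ u.powerset, (-1 : ℝ) ^ (u.card - w.card) *
        f (fun i => if i ∈ w then x i else t i) := by
  unfold anovaTerm
  calc ∑ w ∈ u.powerset, (-1 : ℝ) ^ (u.card - w.card) *
        ((∏ i ∈ wᶜ, (b i - a i))⁻¹ *
          ∫ s : {i : Fin d // i ∉ w} → ℝ in
              Set.univ.pi (fun i : {i : Fin d // i ∉ w} => Set.Icc (a i.1) (b i.1)),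
            f (fun i => if h : i ∈ w then x i else s ⟨i, h⟩))
      = ∑ w ∈ u.powerset, (∏ i, (b i - a i))⁻¹ *
          ∫ t in box a b, (-1 : ℝ) ^ (u.card - w.card) *
            f (fun i => if i ∈ w then x i else t i) := by
        refine Finset.sum_congr rfl fun w _ => ?_
        rw [avg_eq a b hab f hf w x, integral_const_mul]
        ring
    _ = (∏ i, (b i - a i))⁻¹ * ∑ w ∈ u.powerset,
          ∫ t in box a b, (-1 : ℝ) ^ (u.card - w.card) *
            f (fun i => if i ∈ w then x i else t i) := by
        rw [Finset.mul_sum]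
    _ = (∏ i, (b i - a i))⁻¹ *
        ∫ t in box a b, ∑ w ∈ u.powerset, (-1 : ℝ) ^ (u.card - w.card) *
          f (fun i => if i ∈ w then x i else t i) := by
        congr 1
        rw [← MeasureTheory.integral_finset_sum]
        intro w _
        exact ((continuous_const.mul
          (continuous_combine hf x w)).continuousOn).integrableOn_compact (isCompact_box a b)

end final
/-- for `v ⊆ u` and `f` which is `|v|` times continuously
differentiable, the ANOVA term satisfies
`‖f_{u,A}‖_∞ ≤ 2^{|u|−|v|} ‖∂_v f‖_∞ vol(D_v)` on `D = ∏ [a i, b i]`. -/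
theorem statement_5 {d : ℕ} (a b : Fin d → ℝ) (hab : ∀ i, a i < b i)
    (u v : Finset (Fin d)) (hvu : v ⊆ u)
    (f : (Fin d → ℝ) → ℝ) (hf : ContDiff ℝ v.card f) :
    ∀ x ∈ Set.univ.pi fun i => Set.Icc (a i) (b i),
      |anovaTerm a b f u x| ≤
        2 ^ (u.card - v.card) *
          (⨆ y : (Set.univ.pi fun i => Set.Icc (a i) (b i) : Set (Fin d → ℝ)),
            |mixedPartial v f y|) *
          ∏ i ∈ v, (b i - a i) := by
  intro x hx
  have hfc : Continuous f := hf.continuous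
  have hxbox : x ∈ box a b := hx
  set M : ℝ := ⨆ y : (Set.univ.pi fun i => Set.Icc (a i) (b i) : Set (Fin d → ℝ)),
    |mixedPartial v f y| with hM
  set K : ℝ := 2 ^ (u.card - v.card) * M * ∏ i ∈ v, (b i - a i) with hK
  set L : List (Fin d) := (u \ v).toList ++ v.toList.reverse with hL
  have hdisj : List.Disjoint (u \ v).toList v.toList.reverse := by
    intro i hi hir
    have h1 : i ∈ u \ v := (Finset.mem_toList).1 hi
    have h2 : i ∈ v := (Finset.mem_toList).1 (List.mem_reverse.1 hir)
    exact (Finset.mem_sdiff.1 h1).2 h2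
  have hnd : L.Nodup :=
    List.Nodup.append (Finset.nodup_toList _)
      (List.nodup_reverse.2 (Finset.nodup_toList _)) hdisj
  have hLfin : L.toFinset = u := by
    rw [hL, List.toFinset_append, List.toFinset_reverse, Finset.toList_toFinset,
      Finset.toList_toFinset]
    exact Finset.sdiff_union_of_subset hvu
  have hLlen : L.length = u.card := by
    rw [hL, List.length_append, List.length_reverse, Finset.length_toList,
      Finset.length_toList]
    exact Finset.card_sdiff_add_card_eq_card hvu
  have hlen2 : (u \ v).toList.length = u.card - v.card := by
    rw [Finset.length_toList, Finset.card_sdiff_of_subset hvu]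
  have hpt : ∀ t ∈ box a b,
      |∑ w ∈ u.powerset, (-1 : ℝ) ^ (u.card - w.card) *
        f (fun i => if i ∈ w then x i else t i)| ≤ K := by
    intro t ht
    have heq := mdiffL_eq_sum x t L hnd f
    rw [hLfin, hLlen] at heq
    rw [← heq]
    have hp := mdiffL_peel a b hab v (u \ v).toList hnd f hf x hxbox t ht
    rw [hlen2] at hp
    exact hp
  rw [anova_eq a b hab f hfc u x]
  have hvolfin : volume (box a b) < ⊤ := (isCompact_box a b).measure_lt_top
  have hmeas : AEStronglyMeasurable
      (fun t : Fin d → ℝ => ∑ w ∈ u.powerset, (-1 : ℝ) ^ (u.card - w.card) *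
        f (fun i => if i ∈ w then x i else t i)) (volume.restrict (box a b)) := by
    refine Continuous.aestronglyMeasurable ?_
    exact continuous_finset_sum _ fun w _ => continuous_const.mul (continuous_combine hfc x w)
  have hint := MeasureTheory.norm_setIntegral_le_of_norm_le_const (f := fun t : Fin d → ℝ => ∑ w ∈ u.powerset, (-1 : ℝ) ^ (u.card - w.card) *
          f (fun i => if i ∈ w then x i else t i)) hvolfin
    (fun t ht => by simpa [Real.norm_eq_abs] using hpt t ht)
  rw [measureReal_def, box_volume a b hab] at hint
  have hprodpos : (0 : ℝ) < ∏ i, (b i - a i) := Finset.prod_pos fun i _ => sub_pos.2 (hab i)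
  rw [abs_mul, abs_inv, abs_of_pos hprodpos]
  calc (∏ i, (b i - a i))⁻¹ *
        |∫ t in box a b, ∑ w ∈ u.powerset, (-1 : ℝ) ^ (u.card - w.card) *
          f (fun i => if i ∈ w then x i else t i)|
      ≤ (∏ i, (b i - a i))⁻¹ * (K * ∏ i, (b i - a i)) := by
        refine mul_le_mul_of_nonneg_left ?_ (by positivity)
        simpa [Real.norm_eq_abs] using hint
    _ = K := by field_simp
end

section
/- Let B_1, …, B_N ∈ ℝ^{d×d} be matrices whose diagonal entries are all zero. For an orthogonal matrix U ∈ ℝ^{d×d} define its joint sparsity level ℓ₀(U) := #{(i,j) ∈ {1,…,d}² : (Uᵀ B_n U)_{ij} ≠ 0 for some n ∈ {1,…,N}}. If an orthogonal matrix U satisfies ℓ₀(U) = max{ dim span{B_1,…,B_N}, max_{n∈{1,…,N}} rank(B_n) }, then U is a global minimizer of ℓ₀ over all orthogonal matrices in ℝ^{d×d}. -/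
set_option maxHeartbeats 1000000

open Matrix

/-- If every matrix in `T` is supported on a finite index set `S`, then the span of `T`
has dimension at most `S.card`. -/
lemma aux_span_le_card {d : ℕ} (S : Finset (Fin d × Fin d))
    (T : Set (Matrix (Fin d) (Fin d) ℝ))
    (hT : ∀ M ∈ T, ∀ p : Fin d × Fin d, M p.1 p.2 ≠ 0 → p ∈ S) :
    Module.finrank ℝ (Submodule.span ℝ T) ≤ S.card := by
  classical
  set g : Fin d × Fin d → Matrix (Fin d) (Fin d) ℝ :=
    fun p => single p.1 p.2 (1 : ℝ) with hg
  have hsub : Submodule.span ℝ T ≤ Submodule.span ℝ ((S.image g : Finset _) : Set _) := by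
    refine Submodule.span_le.mpr fun M hM => ?_
    rw [matrix_eq_sum_single M]
    refine Submodule.sum_mem _ fun i _ => Submodule.sum_mem _ fun j _ => ?_
    by_cases h : M i j = 0
    · simp [h]
    · have hmem : (i, j) ∈ S := hT M hM (i, j) h
      have : single i j (M i j) = (M i j) • g (i, j) := by
        simp [hg]
      rw [this]
      exact Submodule.smul_mem _ _
        (Submodule.subset_span (by rw [Finset.coe_image]; exact Set.mem_image_of_mem g hmem))
  have h1 : Module.finrank ℝ (Submodule.span ℝ T)
      ≤ Module.finrank ℝ (Submodule.span ℝ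
        (↑(S.image g) : Set (Matrix (Fin d) (Fin d) ℝ))) :=
    Submodule.finrank_mono hsub
  have h2 : Module.finrank ℝ (Submodule.span ℝ
        (↑(S.image g) : Set (Matrix (Fin d) (Fin d) ℝ)))
      ≤ (S.image g).card := finrank_span_finset_le_card (S.image g)
  exact h1.trans (h2.trans Finset.card_image_le)

/-- The rank of a matrix is at most the number of its nonzero entries. -/
lemma aux_rank_le_card {d : ℕ} (M : Matrix (Fin d) (Fin d) ℝ) :
    M.rank ≤ (Finset.univ.filter fun p : Fin d × Fin d => M p.1 p.2 ≠ 0).card := by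
  classical
  set S : Finset (Fin d × Fin d) :=
    Finset.univ.filter fun p : Fin d × Fin d => M p.1 p.2 ≠ 0 with hS
  set R : Finset (Fin d) := S.image Prod.fst with hR
  set g : Fin d → (Fin d → ℝ) := fun i => Pi.single i (1 : ℝ) with hg
  have hsub : Submodule.span ℝ (Set.range Mᵀ) ≤ Submodule.span ℝ ((R.image g : Finset _) : Set _) := by
    refine Submodule.span_le.mpr ?_
    rintro _ ⟨j, rfl⟩
    have hdecomp : Mᵀ j = ∑ i, Pi.single i (Mᵀ j i) := (Finset.univ_sum_single (Mᵀ j)).symm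
    rw [hdecomp]
    refine Submodule.sum_mem _ fun i _ => ?_
    by_cases h : Mᵀ j i = 0
    · have h' : M i j = 0 := h
      simp [h']
    · have hmem : i ∈ R := by
        refine Finset.mem_image_of_mem Prod.fst (a := (i, j)) ?_
        simp only [hS, Finset.mem_filter, Finset.mem_univ, true_and]
        exact h
      have hsingle : Pi.single i (Mᵀ j i) = (Mᵀ j i) • g i := by
        ext k
        simp [hg, Pi.single_apply, mul_ite]
      rw [hsingle]
      exact Submodule.smul_mem _ _
        (Submodule.subset_span (by rw [Finset.coe_image]; exact Set.mem_image_of_mem g hmem))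
  have h1 : Module.finrank ℝ (Submodule.span ℝ (Set.range Mᵀ))
      ≤ Module.finrank ℝ (Submodule.span ℝ (↑(R.image g) : Set (Fin d → ℝ))) :=
    Submodule.finrank_mono hsub
  have h2 : Module.finrank ℝ (Submodule.span ℝ (↑(R.image g) : Set (Fin d → ℝ)))
      ≤ (R.image g).card := finrank_span_finset_le_card (R.image g)
  have h3 : (R.image g).card ≤ S.card :=
    Finset.card_image_le.trans Finset.card_image_le
  rw [rank_eq_finrank_span_cols M]
  exact h1.trans (h2.trans h3)

/-- let `B_1, …, B_N` have zero diagonals and, for orthogonal `U`,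
let `ℓ₀(U)` be the number of index pairs `(i,j)` with `(Uᵀ B_n U)_{ij} ≠ 0` for
some `n`.  If an orthogonal `U` satisfies
`ℓ₀(U) = max{dim span{B_n}, max_n rank B_n}`, then `U` minimizes `ℓ₀` over all
orthogonal matrices. -/
theorem statement_11 {d N : ℕ} (B : Fin N → Matrix (Fin d) (Fin d) ℝ)
    (hdiag : ∀ n i, B n i i = 0)
    (U : Matrix (Fin d) (Fin d) ℝ) (hU : Uᵀ * U = 1)
    (hopt : (Finset.univ.filter fun p : Fin d × Fin d =>
        ∃ n : Fin N, (Uᵀ * B n * U) p.1 p.2 ≠ 0).card =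
      max (Module.finrank ℝ (Submodule.span ℝ (Set.range B)))
        (Finset.univ.sup fun n : Fin N => (B n).rank)) :
    ∀ V : Matrix (Fin d) (Fin d) ℝ, Vᵀ * V = 1 →
      (Finset.univ.filter fun p : Fin d × Fin d =>
          ∃ n : Fin N, (Uᵀ * B n * U) p.1 p.2 ≠ 0).card ≤
        (Finset.univ.filter fun p : Fin d × Fin d =>
          ∃ n : Fin N, (Vᵀ * B n * V) p.1 p.2 ≠ 0).card := by
  classical
  intro V hV
  rw [hopt]
  set S : Finset (Fin d × Fin d) :=
    Finset.univ.filter fun p : Fin d × Fin d =>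
      ∃ n : Fin N, (Vᵀ * B n * V) p.1 p.2 ≠ 0 with hS
  have hVV : V * Vᵀ = 1 := mul_eq_one_comm.mp hV
  have hdet : IsUnit V.det := by
    have h := congrArg Matrix.det hV
    rw [det_mul, det_transpose, det_one] at h
    exact IsUnit.of_mul_eq_one _ h
  have hdetT : IsUnit Vᵀ.det := by rwa [det_transpose]
  apply max_le
  · -- span bound
    set e : Matrix (Fin d) (Fin d) ℝ ≃ₗ[ℝ] Matrix (Fin d) (Fin d) ℝ :=
      { toFun := fun X => Vᵀ * X * V
        map_add' := fun X Y => by noncomm_ring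
        map_smul' := fun c X => by simp [Matrix.mul_smul, Matrix.smul_mul]
        invFun := fun X => V * X * Vᵀ
        left_inv := fun X => by
          simp only []
          calc V * (Vᵀ * X * V) * Vᵀ = (V * Vᵀ) * X * (V * Vᵀ) := by noncomm_ring
            _ = X := by rw [hVV]; simp
        right_inv := fun X => by
          simp only []
          calc Vᵀ * (V * X * Vᵀ) * V = (Vᵀ * V) * X * (Vᵀ * V) := by noncomm_ring
            _ = X := by rw [hV]; simp } with he
    have key : Module.finrank ℝ (Submodule.span ℝ (Set.range B)) =
        Module.finrank ℝ (Submodule.span ℝ (Set.range fun n => Vᵀ * B n * V)) := by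
      have himg : (⇑(e : Matrix (Fin d) (Fin d) ℝ →ₗ[ℝ] Matrix (Fin d) (Fin d) ℝ)) ''
          Set.range B = Set.range (fun n => Vᵀ * B n * V) := by
        rw [← Set.range_comp]
        rfl
      rw [← LinearEquiv.finrank_map_eq e (Submodule.span ℝ (Set.range B)),
        Submodule.map_span, himg]
    rw [key]
    refine aux_span_le_card S _ ?_
    rintro M ⟨n, rfl⟩ p hp
    simp only [hS, Finset.mem_filter, Finset.mem_univ, true_and]
    exact ⟨n, hp⟩
  · -- rank bound
    refine Finset.sup_le fun n _ => ?_
    have h1 : (Vᵀ * B n * V).rank = (B n).rank := by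
      rw [rank_mul_eq_left_of_isUnit_det _ _ hdet,
        rank_mul_eq_right_of_isUnit_det _ _ hdetT]
    calc (B n).rank = (Vᵀ * B n * V).rank := h1.symm
      _ ≤ (Finset.univ.filter fun p : Fin d × Fin d => (Vᵀ * B n * V) p.1 p.2 ≠ 0).card :=
        aux_rank_le_card _
      _ ≤ S.card := by
        refine Finset.card_le_card (Finset.monotone_filter_right _ ?_)
        intro p _ hp
        exact ⟨n, hp⟩
end

section
/- Let d ≥ 2. For every U ∈ SO(d) there exist angle vectors α^r = (α^r_1, …, α^r_r) for r = 1, …, d−1 with α^r_1 ∈ [0, 2π) and α^r_j ∈ [0, π) for 2 ≤ j ≤ r, such that U = ∏_{r=1}^{d−1} ∏_{j=1}^{r} R(d − 1 − r + j, α^r_j), where the products are taken in order of increasing r and, within each r, increasing j. -/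
open Matrix

/-- The Jacobi (Givens) rotation matrix acting in the coordinate plane
`(k, k+1)` (0-indexed; the paper's 1-indexed `R(k+1, θ)`). -/
noncomputable def givens (d : ℕ) (k : ℕ) (θ : ℝ) : Matrix (Fin d) (Fin d) ℝ :=
  Matrix.of fun i j =>
    if (i : ℕ) = k ∧ (j : ℕ) = k then Real.cos θ
    else if (i : ℕ) = k ∧ (j : ℕ) = k + 1 then -Real.sin θ
    else if (i : ℕ) = k + 1 ∧ (j : ℕ) = k then Real.sin θ
    else if (i : ℕ) = k + 1 ∧ (j : ℕ) = k + 1 then Real.cos θ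
    else if i = j then 1 else 0

lemma sum_two_aux {d : ℕ} (a b : Fin d) (hab : a ≠ b) (f : Fin d → ℝ)
    (hf : ∀ i, i ≠ a → i ≠ b → f i = 0) : ∑ i, f i = f a + f b := by
  rw [← Finset.sum_pair hab]
  refine (Finset.sum_subset (Finset.subset_univ _) ?_).symm
  intro i _ hi
  simp only [Finset.mem_insert, Finset.mem_singleton, not_or] at hi
  exact hf i hi.1 hi.2

lemma vecMul_givens {d : ℕ} (k : ℕ) (hk : k + 1 < d) (θ : ℝ) (v : Fin d → ℝ) :
    v ᵥ* givens d k θ = fun j : Fin d =>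
      if (j : ℕ) = k then v ⟨k, by omega⟩ * Real.cos θ + v ⟨k+1, hk⟩ * Real.sin θ
      else if (j : ℕ) = k + 1 then -(v ⟨k, by omega⟩ * Real.sin θ) + v ⟨k+1, hk⟩ * Real.cos θ
      else v j := by
  funext j
  simp only [Matrix.vecMul, dotProduct]
  by_cases hj : (j : ℕ) = k
  · rw [sum_two_aux ⟨k, by omega⟩ ⟨k+1, hk⟩ (by simp) _ ?_]
    · simp [givens, hj, Fin.ext_iff]
    · intro i hi1 hi2
      have h1 : (i:ℕ) ≠ k := by simpa [Fin.ext_iff] using hi1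
      have h2 : (i:ℕ) ≠ k+1 := by simpa [Fin.ext_iff] using hi2
      have : i ≠ j := by simp [Fin.ext_iff, hj, h1]
      simp [givens, hj, h1, h2, this]
  · by_cases hj2 : (j : ℕ) = k + 1
    · rw [sum_two_aux ⟨k, by omega⟩ ⟨k+1, hk⟩ (by simp) _ ?_]
      · simp [givens, hj, hj2, Fin.ext_iff]
      · intro i hi1 hi2
        have h1 : (i:ℕ) ≠ k := by simpa [Fin.ext_iff] using hi1
        have h2 : (i:ℕ) ≠ k+1 := by simpa [Fin.ext_iff] using hi2
        have : i ≠ j := by simp [Fin.ext_iff, hj2, h2]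
        simp [givens, hj, hj2, h1, h2, this]
    · rw [Fintype.sum_eq_single j ?_]
      · simp [givens, hj, hj2]
      · intro i hi
        have : i ≠ j := hi
        simp [givens, hj, hj2, Fin.ext_iff]
        omega


lemma givens_mul {d : ℕ} (k : ℕ) (hk : k + 1 < d) (θ φ : ℝ) :
    givens d k θ * givens d k φ = givens d k (θ + φ) := by
  funext i j
  have h : (givens d k θ * givens d k φ) i j = (givens d k θ i ᵥ* givens d k φ) j := by
    simp [Matrix.mul_apply, Matrix.vecMul, dotProduct]
  rw [h, vecMul_givens k hk]
  by_cases hj1 : (j:ℕ) = k <;> by_cases hj2 : (j:ℕ) = k+1 <;>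
    by_cases hi1 : (i:ℕ) = k <;> by_cases hi2 : (i:ℕ) = k+1 <;>
    simp [givens, hj1, hj2, hi1, hi2, Fin.ext_iff, Real.cos_add, Real.sin_add] <;>
    first | ring1 | omega

lemma givens_zero {d : ℕ} (k : ℕ) : givens d k 0 = 1 := by
  funext i j
  by_cases hi1 : (i:ℕ) = k <;> by_cases hi2 : (i:ℕ) = k+1 <;>
    simp [givens, hi1, hi2, Matrix.one_apply, Fin.ext_iff] <;>
    split_ifs <;> first | rfl | omega

lemma givens_transpose {d : ℕ} (k : ℕ) (θ : ℝ) :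
    (givens d k θ)ᵀ = givens d k (-θ) := by
  funext i j
  by_cases hj1 : (j:ℕ) = k <;> by_cases hj2 : (j:ℕ) = k+1 <;>
    by_cases hi1 : (i:ℕ) = k <;> by_cases hi2 : (i:ℕ) = k+1 <;>
    simp [givens, Matrix.transpose_apply, hj1, hj2, hi1, hi2, Fin.ext_iff, eq_comm] <;>
    split_ifs <;> first | rfl | ring1 | omega | (exfalso; omega)

lemma givens_mul_transpose {d : ℕ} (k : ℕ) (hk : k + 1 < d) (θ : ℝ) :
    givens d k θ * (givens d k θ)ᵀ = 1 := by
  rw [givens_transpose, givens_mul k hk, add_neg_cancel, givens_zero]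

lemma givens_det {d : ℕ} (k : ℕ) (hk : k + 1 < d) (θ : ℝ) :
    (givens d k θ).det = 1 := by
  have h2 : givens d k (θ/2) * givens d k (θ/2) = givens d k θ := by
    rw [givens_mul k hk]; ring_nf
  have hnn : 0 ≤ (givens d k θ).det := by
    rw [← h2, Matrix.det_mul]; exact mul_self_nonneg _
  have hsq : (givens d k θ).det * (givens d k θ).det = 1 := by
    have := congrArg Matrix.det (givens_mul_transpose k hk θ)
    rwa [Matrix.det_mul, Matrix.det_transpose, Matrix.det_one] at this
  nlinarith

lemma list_prod_mul_transpose {d : ℕ} (l : List (Matrix (Fin d) (Fin d) ℝ))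
    (h : ∀ A ∈ l, A * Aᵀ = 1) : l.prod * l.prodᵀ = 1 := by
  induction l with
  | nil => simp
  | cons A l ih =>
    have hA : A * Aᵀ = 1 := h A List.mem_cons_self
    have hl : l.prod * l.prodᵀ = 1 := ih fun B hB => h B (List.mem_cons_of_mem _ hB)
    calc (A :: l).prod * (A :: l).prodᵀ
        = A * (l.prod * l.prodᵀ) * Aᵀ := by
          simp only [List.prod_cons, Matrix.transpose_mul]
          noncomm_ring
      _ = 1 := by rw [hl, mul_one, hA]

lemma list_prod_det_one {d : ℕ} (l : List (Matrix (Fin d) (Fin d) ℝ))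
    (h : ∀ A ∈ l, A.det = 1) : l.prod.det = 1 := by
  induction l with
  | nil => simp
  | cons A l ih =>
    rw [List.prod_cons, Matrix.det_mul, h A List.mem_cons_self,
      ih fun B hB => h B (List.mem_cons_of_mem _ hB), one_mul]

lemma vecMul_givens_fix {d : ℕ} (k : ℕ) (hk : k + 1 < d) (θ : ℝ) (v : Fin d → ℝ)
    (h1 : v ⟨k, by omega⟩ = 0) (h2 : v ⟨k+1, hk⟩ = 0) : v ᵥ* givens d k θ = v := by
  rw [vecMul_givens k hk]
  funext j
  by_cases hj1 : (j:ℕ) = k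
  · have : j = ⟨k, by omega⟩ := Fin.ext hj1
    simp [hj1, h1, h2, this]
  · by_cases hj2 : (j:ℕ) = k+1
    · have : j = ⟨k+1, hk⟩ := Fin.ext hj2
      simp [hj1, hj2, h1, h2, this]
    · simp [hj1, hj2]

lemma vecMul_list_fix {d : ℕ} (v : Fin d → ℝ) (l : List (Matrix (Fin d) (Fin d) ℝ))
    (h : ∀ A ∈ l, v ᵥ* A = v) : v ᵥ* l.prod = v := by
  induction l with
  | nil => simp
  | cons A l ih =>
    rw [List.prod_cons, ← Matrix.vecMul_vecMul, h A List.mem_cons_self]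
    exact ih fun B hB => h B (List.mem_cons_of_mem _ hB)

lemma exists_theta_Ico_pi (c s : ℝ) (h : c^2 + s^2 = 1) (hs : 0 ≤ s)
    (h2 : 0 < s ∨ c ≠ -1) : ∃ θ ∈ Set.Ico 0 Real.pi, Real.cos θ = c ∧ Real.sin θ = s := by
  have hc1 : -1 ≤ c := by nlinarith
  have hc2 : c ≤ 1 := by nlinarith
  refine ⟨Real.arccos c, ⟨Real.arccos_nonneg c, ?_⟩, Real.cos_arccos hc1 hc2, ?_⟩
  · rcases lt_or_eq_of_le (Real.arccos_le_pi c) with h' | h'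
    · exact h'
    · exfalso
      have : c = -1 := by
        have := Real.cos_arccos hc1 hc2
        rw [h', Real.cos_pi] at this; linarith
      have hs0 : s = 0 := by nlinarith
      rcases h2 with h2 | h2
      · linarith
      · exact h2 this
  · rw [Real.sin_arccos]
    have : 1 - c^2 = s^2 := by linarith
    rw [this, Real.sqrt_sq hs]

lemma exists_theta_Ico_two_pi (c s : ℝ) (h : c^2 + s^2 = 1) :
    ∃ θ ∈ Set.Ico 0 (2 * Real.pi), Real.cos θ = c ∧ Real.sin θ = s := by
  have hc1 : -1 ≤ c := by nlinarith
  have hc2 : c ≤ 1 := by nlinarith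
  have hpi := Real.pi_pos
  by_cases hs : 0 ≤ s
  · refine ⟨Real.arccos c, ⟨Real.arccos_nonneg c, ?_⟩, Real.cos_arccos hc1 hc2, ?_⟩
    · have := Real.arccos_le_pi c; linarith
    · rw [Real.sin_arccos]
      have : 1 - c^2 = s^2 := by linarith
      rw [this, Real.sqrt_sq hs]
  · push_neg at hs
    refine ⟨2 * Real.pi - Real.arccos c, ⟨?_, ?_⟩, ?_, ?_⟩
    · have := Real.arccos_le_pi c; linarith
    · have h0 : 0 < Real.arccos c := by
        rcases lt_or_eq_of_le (Real.arccos_nonneg c) with h' | h'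
        · exact h'
        · exfalso
          have : c = 1 := by
            have := Real.cos_arccos hc1 hc2
            rw [← h', Real.cos_zero] at this; linarith
          nlinarith
      linarith
    · rw [Real.cos_sub, Real.cos_two_pi, Real.sin_two_pi, Real.cos_arccos hc1 hc2]; ring
    · rw [Real.sin_sub, Real.cos_two_pi, Real.sin_two_pi, Real.sin_arccos]
      have : 1 - c^2 = s^2 := by linarith
      rw [this, Real.sqrt_sq_eq_abs, abs_of_nonpos (le_of_lt hs)]
      ring

def ebas (d m : ℕ) : Fin d → ℝ := fun j => if (j:ℕ) = m then 1 else 0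

lemma ebas_vecMul_givens {d : ℕ} (m : ℕ) (hm : m + 1 < d) (θ : ℝ) :
    ebas d m ᵥ* givens d m θ = Real.cos θ • ebas d m + (- Real.sin θ) • ebas d (m+1) := by
  rw [vecMul_givens m hm]
  funext j
  by_cases hj1 : (j:ℕ) = m
  · simp [ebas, hj1]
  · by_cases hj2 : (j:ℕ) = m+1
    · simp [ebas, hj1, hj2]
    · simp [ebas, hj1, hj2]

lemma rowstep {d : ℕ} (m n : ℕ) (hd : m + n + 2 ≤ d) (θ : ℕ → ℝ) :
    ebas d m ᵥ* ((List.range (n+1)).map fun j' => givens d (m + j') (θ j')).prod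
      = Real.cos (θ 0) • ebas d m + (- Real.sin (θ 0)) •
          (ebas d (m+1) ᵥ* ((List.range n).map fun j' => givens d (m+1+j') (θ (j'+1))).prod) := by
  rw [List.range_succ_eq_map, List.map_cons, List.map_map, List.prod_cons]
  have hfun : ((fun j' => givens d (m + j') (θ j')) ∘ Nat.succ)
      = fun j' => givens d (m+1+j') (θ (j'+1)) := by
    funext j'
    simp only [Function.comp]
    rw [show m + Nat.succ j' = m + 1 + j' from by omega]
  have hrow := ebas_vecMul_givens (d := d) m (show m + 1 < d by omega) (θ 0)
  rw [hfun, ← Matrix.vecMul_vecMul, add_zero, hrow, Matrix.add_vecMul,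
    Matrix.smul_vecMul, Matrix.smul_vecMul]
  congr 1
  congr 1
  apply vecMul_list_fix
  intro A hA
  simp only [List.mem_map, List.mem_range] at hA
  obtain ⟨j', hj', rfl⟩ := hA
  apply vecMul_givens_fix _ (by omega)
  · simp [ebas]; omega
  · simp [ebas]; omega

lemma uprime_norm {d m : ℕ} (hm : m < d) (u : Fin d → ℝ) (hu : ∑ j, u j ^2 = 1)
    (s : ℝ) (hs : s^2 = 1 - (u ⟨m,hm⟩)^2) (hs0 : s ≠ 0)
    (hlow : ∀ j : Fin d, (j:ℕ) < m → u j = 0) :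
    ∑ j : Fin d, (if (j:ℕ) ≤ m then (0:ℝ) else -(u j)/s)^2 = 1 := by
  have key : ∀ j : Fin d, (if (j:ℕ) ≤ m then (0:ℝ) else -(u j)/s)^2
      = u j^2/s^2 - (if j = (⟨m,hm⟩:Fin d) then u j^2/s^2 else 0) := by
    intro j
    by_cases hj : (j:ℕ) ≤ m
    · rcases lt_or_eq_of_le hj with h' | h'
      · have h0 : u j = 0 := hlow j h'
        have : ¬ (j = (⟨m,hm⟩:Fin d)) := by simp [Fin.ext_iff]; omega
        simp [hj, h0, this]
      · have : j = (⟨m,hm⟩:Fin d) := Fin.ext h'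
        simp [hj, this]
    · have : ¬ (j = (⟨m,hm⟩:Fin d)) := by simp [Fin.ext_iff]; omega
      simp [hj, this]
      ring
  rw [Finset.sum_congr rfl fun j _ => key j, Finset.sum_sub_distrib,
    Finset.sum_ite_eq' Finset.univ (⟨m,hm⟩:Fin d), ← Finset.sum_div, hu]
  simp only [Finset.mem_univ, if_true]
  field_simp
  linarith

lemma recon {d m : ℕ} (hm : m < d) (u : Fin d → ℝ) (s : ℝ) (hs0 : s ≠ 0)
    (hlow : ∀ j : Fin d, (j:ℕ) < m → u j = 0) :
    (u ⟨m,hm⟩) • ebas d m + (-s) • (fun j : Fin d => if (j:ℕ) ≤ m then (0:ℝ) else -(u j)/s) = u := by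
  funext j
  simp only [Pi.add_apply, Pi.smul_apply, smul_eq_mul, ebas]
  by_cases hj1 : (j:ℕ) = m
  · have : j = (⟨m,hm⟩:Fin d) := Fin.ext hj1
    simp [hj1, this]
  · by_cases hj2 : (j:ℕ) ≤ m
    · have := hlow j (by omega)
      simp [hj1, hj2, this]
    · simp [hj1, hj2]
      field_simp

lemma Tlem {d : ℕ} : ∀ n m : ℕ, m + n + 1 ≤ d → ∀ u : Fin d → ℝ,
    (∑ j : Fin d, u j ^ 2 = 1) →
    (∀ j : Fin d, (j:ℕ) < m → u j = 0) →
    (∀ j : Fin d, m + n < (j:ℕ) → u j = 0) →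
    (∃ k : Fin d, 0 < (-1:ℝ)^((k:ℕ) - m) * u k ∧ ∀ j : Fin d, (k:ℕ) < (j:ℕ) → u j = 0) →
    ∃ θ : ℕ → ℝ, (∀ j < n, θ j ∈ Set.Ico 0 Real.pi) ∧
      ebas d m ᵥ* ((List.range n).map fun j' => givens d (m + j') (θ j')).prod = u := by
  intro n
  induction n with
  | zero =>
    intro m hm u hu hlow hhigh hsign
    obtain ⟨k, hk1, hk2⟩ := hsign
    have hm' : m < d := by omega
    have hne : u k ≠ 0 := by
      intro h; rw [h, mul_zero] at hk1; exact lt_irrefl 0 hk1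
    have hkm : (k:ℕ) = m := by
      by_contra h
      rcases Nat.lt_or_ge (k:ℕ) m with h' | h'
      · exact hne (hlow k h')
      · exact hne (hhigh k (by omega))
    have hkeq : k = (⟨m, hm'⟩ : Fin d) := Fin.ext hkm
    have hum_pos : 0 < u ⟨m, hm'⟩ := by
      rw [hkeq] at hk1; simpa using hk1
    have hsum : u ⟨m, hm'⟩ ^ 2 = 1 := by
      rw [← hu, Fintype.sum_eq_single (⟨m, hm'⟩ : Fin d)]
      intro j hj
      have hjm : (j:ℕ) ≠ m := by simpa [Fin.ext_iff] using hj
      rcases Nat.lt_or_ge (j:ℕ) m with h' | h'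
      · rw [hlow j h']; ring
      · rw [hhigh j (by omega)]; ring
    have hum : u ⟨m, hm'⟩ = 1 := by nlinarith
    refine ⟨fun _ => 0, by omega, ?_⟩
    simp only [List.range_zero, List.map_nil, List.prod_nil, Matrix.vecMul_one]
    funext j
    by_cases hj : (j:ℕ) = m
    · have : j = (⟨m, hm'⟩ : Fin d) := Fin.ext hj
      rw [this]; simpa [ebas] using hum.symm
    · rcases Nat.lt_or_ge (j:ℕ) m with h' | h'
      · rw [hlow j h']; simp [ebas, hj]
      · rw [hhigh j (by omega)]; simp [ebas, hj]
  | succ n ih =>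
    intro m hm u hu hlow hhigh hsign
    obtain ⟨k, hk1, hk2⟩ := hsign
    have hm' : m < d := by omega
    have hm1 : m + 1 < d := by omega
    have hne : u k ≠ 0 := by
      intro h; rw [h, mul_zero] at hk1; exact lt_irrefl 0 hk1
    by_cases hA : ∀ j : Fin d, m < (j:ℕ) → u j = 0
    · have hkm : (k:ℕ) = m := by
        by_contra h
        rcases Nat.lt_or_ge (k:ℕ) m with h' | h'
        · exact hne (hlow k h')
        · exact hne (hA k (by omega))
      have hkeq : k = (⟨m, hm'⟩ : Fin d) := Fin.ext hkm
      have hum_pos : 0 < u ⟨m, hm'⟩ := by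
        rw [hkeq] at hk1; simpa using hk1
      have hsum : u ⟨m, hm'⟩ ^ 2 = 1 := by
        rw [← hu, Fintype.sum_eq_single (⟨m, hm'⟩ : Fin d)]
        intro j hj
        have hjm : (j:ℕ) ≠ m := by simpa [Fin.ext_iff] using hj
        rcases Nat.lt_or_ge (j:ℕ) m with h' | h'
        · rw [hlow j h']; ring
        · rw [hA j (by omega)]; ring
      have hum : u ⟨m, hm'⟩ = 1 := by nlinarith
      refine ⟨fun _ => 0, ?_, ?_⟩
      · intro j hj
        exact ⟨le_refl 0, Real.pi_pos⟩
      · rw [vecMul_list_fix]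
        · funext j
          by_cases hj : (j:ℕ) = m
          · have : j = (⟨m, hm'⟩ : Fin d) := Fin.ext hj
            rw [this]; simpa [ebas] using hum.symm
          · rcases Nat.lt_or_ge (j:ℕ) m with h' | h'
            · rw [hlow j h']; simp [ebas, hj]
            · rw [hA j (by omega)]; simp [ebas, hj]
        · intro A hA'
          simp only [List.mem_map, List.mem_range] at hA'
          obtain ⟨j', hj', rfl⟩ := hA'
          rw [givens_zero, Matrix.vecMul_one]
    · push_neg at hA
      obtain ⟨j0, hj0m, hj0⟩ := hA
      have hkgt : m < (k:ℕ) := by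
        by_contra h
        exact hj0 (hk2 j0 (by omega))
      set c := u ⟨m, hm'⟩ with hc
      have huk2 : 0 < u k ^ 2 := pow_two_pos_of_ne_zero hne
      have hpair : u ⟨m, hm'⟩ ^ 2 + u k ^ 2 ≤ ∑ j : Fin d, u j ^ 2 := by
        have hsub := Finset.sum_le_sum_of_subset_of_nonneg
          (Finset.subset_univ ({(⟨m, hm'⟩ : Fin d), k} : Finset (Fin d)))
          (fun i _ _ => sq_nonneg (u i))
        rwa [Finset.sum_pair (show (⟨m, hm'⟩ : Fin d) ≠ k by
          simp only [ne_eq, Fin.ext_iff]; omega)] at hsub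
      have hrange : 0 < 1 - c ^ 2 := by rw [hc]; linarith [hu ▸ hpair]
      set ρ := Real.sqrt (1 - c ^ 2) with hρ
      have hρpos : 0 < ρ := Real.sqrt_pos.mpr hrange
      have hρsq : ρ ^ 2 = 1 - c ^ 2 := Real.sq_sqrt (le_of_lt hrange)
      obtain ⟨θ0, hθ0mem, hθ0c, hθ0s⟩ :=
        exists_theta_Ico_pi c ρ (by linarith) (le_of_lt hρpos) (Or.inl hρpos)
      set u' := fun j : Fin d => if (j:ℕ) ≤ m then (0:ℝ) else -(u j)/ρ with hu'
      obtain ⟨θ', hθ'mem, hθ'row⟩ := ih (m+1) (by omega) u'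
        (uprime_norm hm' u hu ρ (by linarith) (ne_of_gt hρpos) hlow)
        (fun j hj => by simp only [hu']; rw [if_pos (by omega)])
        (fun j hj => by
          simp only [hu']
          rw [hhigh j (by omega)]
          simp)
        ⟨k, by
          have hkk : ¬((k:ℕ) ≤ m) := by omega
          have hpow : ((-1:ℝ))^((k:ℕ)-m) = (-1)^((k:ℕ)-(m+1)) * (-1) := by
            rw [← pow_succ]; congr 1; omega
          simp only [hu', if_neg hkk]
          rw [show (-1:ℝ)^((k:ℕ)-(m+1)) * (-(u k)/ρ) = ((-1)^((k:ℕ)-m) * u k)/ρ from by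
            rw [hpow]; ring]
          exact div_pos hk1 hρpos,
          fun j hj => by
            simp only [hu']
            rw [hk2 j hj]
            simp⟩
      refine ⟨fun j => if j = 0 then θ0 else θ' (j-1), ?_, ?_⟩
      · intro j hj
        by_cases hj0' : j = 0
        · simpa [hj0'] using hθ0mem
        · simp only [if_neg hj0']
          exact hθ'mem (j-1) (by omega)
      · rw [rowstep m n (by omega)]
        have hfun2 : (fun j' => givens d (m+1+j')
            ((fun j => if j = 0 then θ0 else θ' (j-1)) (j'+1)))
            = fun j' => givens d (m+1+j') (θ' j') := by
          funext j'
          simp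
        simp only [eq_self_iff_true, if_true]
        rw [hfun2, hθ'row, hθ0c, hθ0s]
        exact recon hm' u ρ (ne_of_gt hρpos) hlow

lemma Texists {d : ℕ} (n m : ℕ) (hn : 1 ≤ n) (hd : m + n + 1 ≤ d) (u : Fin d → ℝ)
    (hu : ∑ j : Fin d, u j ^ 2 = 1)
    (hlow : ∀ j : Fin d, (j:ℕ) < m → u j = 0)
    (hhigh : ∀ j : Fin d, m + n < (j:ℕ) → u j = 0) :
    ∃ θ : ℕ → ℝ, θ 0 ∈ Set.Ico 0 (2*Real.pi) ∧
      (∀ j, 1 ≤ j → j < n → θ j ∈ Set.Ico 0 Real.pi) ∧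
      ebas d m ᵥ* ((List.range n).map fun j' => givens d (m + j') (θ j')).prod = u := by
  obtain ⟨n', rfl⟩ : ∃ n', n = n' + 1 := ⟨n-1, by omega⟩
  have hm' : m < d := by omega
  have hm1 : m + 1 < d := by omega
  by_cases hA : ∀ j : Fin d, m < (j:ℕ) → u j = 0
  · have hsum : u ⟨m, hm'⟩ ^ 2 = 1 := by
      rw [← hu, Fintype.sum_eq_single (⟨m, hm'⟩ : Fin d)]
      intro j hj
      have hjm : (j:ℕ) ≠ m := by simpa [Fin.ext_iff] using hj
      rcases Nat.lt_or_ge (j:ℕ) m with h' | h'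
      · rw [hlow j h']; ring
      · rw [hA j (by omega)]; ring
    obtain ⟨θ0, hθ0mem, hθ0c, hθ0s⟩ :=
      exists_theta_Ico_two_pi (u ⟨m, hm'⟩) 0 (by rw [← hsum]; ring)
    refine ⟨fun j => if j = 0 then θ0 else 0, by simpa using hθ0mem, ?_, ?_⟩
    · intro j h1 h2
      have hne : ¬ (j = 0) := by omega
      simp only [hne, if_false]
      exact ⟨le_refl 0, Real.pi_pos⟩
    · rw [rowstep m n' (by omega)]
      simp only [eq_self_iff_true, if_true]
      rw [hθ0c, hθ0s]
      simp only [neg_zero, zero_smul, add_zero]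
      funext j
      simp only [Pi.smul_apply, smul_eq_mul, ebas]
      by_cases hj : (j:ℕ) = m
      · have : j = (⟨m, hm'⟩ : Fin d) := Fin.ext hj
        rw [this]; simp [hj]
      · rcases Nat.lt_or_ge (j:ℕ) m with h' | h'
        · rw [hlow j h']; simp [hj]
        · rw [hA j (by omega)]; simp [hj]
  · push_neg at hA
    obtain ⟨j0, hj0m, hj0⟩ := hA
    set S : Finset (Fin d) := Finset.univ.filter (fun j => u j ≠ 0) with hSdef
    have hj0S : j0 ∈ S := by simp [hSdef, hj0]
    have hSne : S.Nonempty := ⟨j0, hj0S⟩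
    set K := S.max' hSne with hKdef
    have hK : u K ≠ 0 := by
      have hmem : K ∈ S := S.max'_mem hSne
      simp only [hSdef, Finset.mem_filter] at hmem
      exact hmem.2
    have hKmax : ∀ j : Fin d, (K:ℕ) < (j:ℕ) → u j = 0 := by
      intro j hj
      by_contra h
      have hjS : j ∈ S := by simp [hSdef, h]
      have := S.le_max' j hjS
      rw [← hKdef] at this
      rw [Fin.le_def] at this
      omega
    have hKgt : m < (K:ℕ) := by
      have := S.le_max' j0 hj0S
      rw [← hKdef, Fin.le_def] at this
      omega
    set c := u ⟨m, hm'⟩ with hc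
    have huk2 : 0 < u K ^ 2 := pow_two_pos_of_ne_zero hK
    have hpair : u ⟨m, hm'⟩ ^ 2 + u K ^ 2 ≤ ∑ j : Fin d, u j ^ 2 := by
      have hsub := Finset.sum_le_sum_of_subset_of_nonneg
        (Finset.subset_univ ({(⟨m, hm'⟩ : Fin d), K} : Finset (Fin d)))
        (fun i _ _ => sq_nonneg (u i))
      rwa [Finset.sum_pair (show (⟨m, hm'⟩ : Fin d) ≠ K by
        simp only [ne_eq, Fin.ext_iff]; omega)] at hsub
    have hrange : 0 < 1 - c ^ 2 := by rw [hc]; linarith [hu ▸ hpair]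
    set ρ := Real.sqrt (1 - c ^ 2) with hρ
    have hρpos : 0 < ρ := Real.sqrt_pos.mpr hrange
    have hρsq : ρ ^ 2 = 1 - c ^ 2 := Real.sq_sqrt (le_of_lt hrange)
    set s := if 0 < (-1:ℝ)^((K:ℕ)-m) * u K then ρ else -ρ with hsdef
    have hssq : s ^ 2 = ρ ^ 2 := by
      rw [hsdef]; split_ifs <;> ring
    have hs0 : s ≠ 0 := by
      rw [hsdef]; split_ifs <;> [exact ne_of_gt hρpos; exact ne_of_lt (by linarith)]
    have hsgn : 0 < ((-1:ℝ)^((K:ℕ)-m) * u K)/s := by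
      by_cases h : 0 < (-1:ℝ)^((K:ℕ)-m) * u K
      · rw [hsdef, if_pos h]
        exact div_pos h hρpos
      · have hne0 : (-1:ℝ)^((K:ℕ)-m) * u K ≠ 0 :=
          mul_ne_zero (pow_ne_zero _ (by norm_num)) hK
        have hlt : (-1:ℝ)^((K:ℕ)-m) * u K < 0 := lt_of_le_of_ne (not_lt.mp h) hne0
        rw [hsdef, if_neg h]
        exact div_pos_of_neg_of_neg hlt (by linarith)
    obtain ⟨θ0, hθ0mem, hθ0c, hθ0s⟩ :=
      exists_theta_Ico_two_pi c s (by rw [hssq]; linarith)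
    set u' := fun j : Fin d => if (j:ℕ) ≤ m then (0:ℝ) else -(u j)/s with hu'
    obtain ⟨θ', hθ'mem, hθ'row⟩ := Tlem n' (m+1) (by omega) u'
      (uprime_norm hm' u hu s (by rw [hssq]; linarith) hs0 hlow)
      (fun j hj => by simp only [hu']; rw [if_pos (by omega)])
      (fun j hj => by
        simp only [hu']
        rw [hhigh j (by omega)]
        simp)
      ⟨K, by
        have hkk : ¬((K:ℕ) ≤ m) := by omega
        have hpow : ((-1:ℝ))^((K:ℕ)-m) = (-1)^((K:ℕ)-(m+1)) * (-1) := by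
          rw [← pow_succ]; congr 1; omega
        simp only [hu', if_neg hkk]
        rw [show (-1:ℝ)^((K:ℕ)-(m+1)) * (-(u K)/s) = ((-1)^((K:ℕ)-m) * u K)/s from by
          rw [hpow]; ring]
        exact hsgn,
        fun j hj => by
          simp only [hu']
          rw [hKmax j hj]
          simp⟩
    refine ⟨fun j => if j = 0 then θ0 else θ' (j-1), by simpa using hθ0mem, ?_, ?_⟩
    · intro j h1 h2
      have hne : ¬ (j = 0) := by omega
      simp only [hne, if_false]
      exact hθ'mem (j-1) (by omega)
    · rw [rowstep m n' (by omega)]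
      have hfun2 : (fun j' => givens d (m+1+j')
          ((fun j => if j = 0 then θ0 else θ' (j-1)) (j'+1)))
          = fun j' => givens d (m+1+j') (θ' j') := by
        funext j'
        simp
      simp only [eq_self_iff_true, if_true]
      rw [hfun2, hθ'row, hθ0c, hθ0s]
      exact recon hm' u s hs0 hlow

lemma col_of_row {d : ℕ} (A : Matrix (Fin d) (Fin d) ℝ) (hA : A * Aᵀ = 1) (i : Fin d)
    (hrow : ∀ j, A i j = if i = j then 1 else 0) :
    ∀ l, A l i = if l = i then 1 else 0 := by
  intro l
  have h1 : ∑ j, A l j * A i j = (1 : Matrix (Fin d) (Fin d) ℝ) l i := by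
    rw [← hA]; simp [Matrix.mul_apply, Matrix.transpose_apply]
  have h2 : ∑ j, A l j * A i j = A l i := by
    rw [Finset.sum_congr rfl (fun j _ => show A l j * A i j = if j = i then A l j else 0 from by
      rw [hrow j]; by_cases h : i = j <;> simp [h, eq_comm]),
      Finset.sum_ite_eq' Finset.univ i]
    simp
  rw [← h2, h1, Matrix.one_apply]

lemma row_of_prod {d : ℕ} (A B : Matrix (Fin d) (Fin d) ℝ) (i : Fin d) :
    (A * B) i = A i ᵥ* B := by
  funext j
  simp [Matrix.mul_apply, Matrix.vecMul, dotProduct]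

lemma block {d : ℕ} : ∀ n : ℕ, n ≤ d → ∀ U : Matrix (Fin d) (Fin d) ℝ,
    Uᵀ * U = 1 → U.det = 1 →
    (∀ i j : Fin d, ((i:ℕ) < d - n ∨ (j:ℕ) < d - n) → U i j = if i = j then 1 else 0) →
    ∃ α : ℕ → ℕ → ℝ,
      (∀ r' < n - 1, α r' 0 ∈ Set.Ico 0 (2 * Real.pi) ∧
        ∀ j', 1 ≤ j' → j' ≤ r' → α r' j' ∈ Set.Ico 0 Real.pi) ∧
      U = ((List.range (n - 1)).map fun r' =>
            (((List.range (r' + 1)).map fun j' =>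
              givens d (d - 2 - r' + j') (α r' j')).prod)).prod := by
  intro n
  induction n with
  | zero =>
    intro hn U hU hdet hfix
    refine ⟨fun _ _ => 0, by omega, ?_⟩
    simp only [Nat.zero_sub, List.range_zero, List.map_nil, List.prod_nil]
    funext i j
    rw [hfix i j (Or.inl (by omega)), Matrix.one_apply]
  | succ n ih =>
    intro hn U hU hdet hfix
    match n, ih with
    | 0, _ =>
      -- d ≥ 1, U is identity outside the (d-1,d-1) corner; orthogonality + det force U = 1
      have hd1 : 1 ≤ d := hn
      have hL : d - 1 < d := by omega
      set L : Fin d := ⟨d - 1, hL⟩ with hLdef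
      have hoff : ∀ i j : Fin d, (U i j = if i = j then 1 else 0) ∨ (i = L ∧ j = L) := by
        intro i j
        by_cases hi : (i:ℕ) < d - 1
        · exact Or.inl (hfix i j (Or.inl hi))
        · by_cases hj : (j:ℕ) < d - 1
          · exact Or.inl (hfix i j (Or.inr hj))
          · right
            have := i.isLt; have := j.isLt
            constructor <;> (apply Fin.ext; simp [hLdef]; omega)
      have hdiagU : U = Matrix.diagonal (fun i => U i i) := by
        funext i j
        by_cases h : i = j
        · subst h; rw [Matrix.diagonal_apply_eq]
        · rw [Matrix.diagonal_apply_ne _ h]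
          rcases hoff i j with h' | ⟨h1, h2⟩
          · rw [h']; simp [h]
          · exact absurd (h1.trans h2.symm) h
      have hdet2 : U.det = U L L := by
        conv_lhs => rw [hdiagU]
        rw [Matrix.det_diagonal]
        refine Fintype.prod_eq_single L fun i hi => ?_
        have hiL : (i:ℕ) < d - 1 := by
          have := i.isLt
          have : (i:ℕ) ≠ d - 1 := by simpa [hLdef, Fin.ext_iff] using hi
          omega
        rw [hfix i i (Or.inl hiL), if_pos rfl]
      have hULL : U L L = 1 := by rw [← hdet2, hdet]
      have hU1 : U = 1 := by
        funext i j
        by_cases h : i = j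
        · subst h
          by_cases hiL : i = L
          · rw [hiL, hULL, Matrix.one_apply_eq]
          · have hi : (i:ℕ) < d - 1 := by
              have := i.isLt
              have : (i:ℕ) ≠ d - 1 := by simpa [hLdef, Fin.ext_iff] using hiL
              omega
            rw [hfix i i (Or.inl hi), if_pos rfl, Matrix.one_apply_eq]
        · rw [Matrix.one_apply_ne h]
          rcases hoff i j with h' | ⟨h1, h2⟩
          · rw [h']; simp [h]
          · exact absurd (h1.trans h2.symm) h
      exact ⟨fun _ _ => 0, by omega, by
        simpa only [Nat.add_sub_cancel, List.range_zero, List.map_nil, List.prod_nil] using hU1⟩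
    | n' + 1, ih =>
      -- main inductive step; the new block has n'+1 rotations in planes m..d-2, m = d-(n'+2)
      have hd : n' + 2 ≤ d := hn
      set m : ℕ := d - (n' + 2) with hmdef
      have hm' : m < d := by omega
      have hmn : m + (n' + 1) + 1 = d := by omega
      have hUUt : U * Uᵀ = 1 := mul_eq_one_comm.mp hU
      set u : Fin d → ℝ := U ⟨m, hm'⟩ with hudef
      have hu : ∑ j, u j ^ 2 = 1 := by
        have h1 : (U * Uᵀ) ⟨m, hm'⟩ ⟨m, hm'⟩ = 1 := by rw [hUUt, Matrix.one_apply_eq]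
        rw [Matrix.mul_apply] at h1
        rw [← h1]
        exact Finset.sum_congr rfl fun j _ => by rw [Matrix.transpose_apply]; ring
      have hlow : ∀ j : Fin d, (j:ℕ) < m → u j = 0 := by
        intro j hj
        rw [hudef, hfix ⟨m, hm'⟩ j (Or.inr (by omega)), if_neg (by simp [Fin.ext_iff]; omega)]
      have hhigh : ∀ j : Fin d, m + (n' + 1) < (j:ℕ) → u j = 0 := by
        intro j hj
        exact absurd j.isLt (by omega)
      obtain ⟨θ, hθ0, hθj, hrowW⟩ := Texists (n' + 1) m (by omega) (by omega) u hu hlow hhigh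
      set W : Matrix (Fin d) (Fin d) ℝ :=
        ((List.range (n' + 1)).map fun j' => givens d (m + j') (θ j')).prod with hWdef
      have hWfact : ∀ A ∈ (List.range (n' + 1)).map fun j' => givens d (m + j') (θ j'),
          A * Aᵀ = 1 ∧ A.det = 1 := by
        intro A hA
        simp only [List.mem_map, List.mem_range] at hA
        obtain ⟨j', hj', rfl⟩ := hA
        exact ⟨givens_mul_transpose _ (by omega) _, givens_det _ (by omega) _⟩
      have hWo : W * Wᵀ = 1 := list_prod_mul_transpose _ fun A hA => (hWfact A hA).1
      have hWdet : W.det = 1 := list_prod_det_one _ fun A hA => (hWfact A hA).2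
      have hWtW : Wᵀ * W = 1 := mul_eq_one_comm.mp hWo
      set U₂ : Matrix (Fin d) (Fin d) ℝ := U * Wᵀ with hU₂def
      have hU₂o : U₂ᵀ * U₂ = 1 := by
        rw [hU₂def, Matrix.transpose_mul, Matrix.transpose_transpose, Matrix.mul_assoc,
          ← Matrix.mul_assoc Uᵀ, hU, Matrix.one_mul, hWo]
      have hU₂det : U₂.det = 1 := by
        rw [hU₂def, Matrix.det_mul, Matrix.det_transpose, hdet, hWdet, one_mul]
      have hU₂UUt : U₂ * U₂ᵀ = 1 := mul_eq_one_comm.mp hU₂o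
      -- rows of U₂ with index ≤ m are standard basis vectors
      have hrowsU₂ : ∀ i : Fin d, (i:ℕ) ≤ m → ∀ j, U₂ i j = if i = j then 1 else 0 := by
        intro i hi
        have key : U₂ i = fun j => if i = j then (1:ℝ) else 0 := by
          rw [hU₂def, row_of_prod]
          rcases Nat.lt_or_ge (i:ℕ) m with h' | h'
          · have hUi : U i = fun j => if i = j then (1:ℝ) else 0 :=
              funext fun j => hfix i j (Or.inl (by omega))
            have hfixW : (fun j => if i = j then (1:ℝ) else 0) ᵥ* W
                = fun j => if i = j then (1:ℝ) else 0 := by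
              apply vecMul_list_fix
              intro A hA
              simp only [List.mem_map, List.mem_range] at hA
              obtain ⟨j', hj', rfl⟩ := hA
              apply vecMul_givens_fix _ (by omega)
              · show (if i = ⟨m + j', by omega⟩ then (1:ℝ) else 0) = 0
                rw [if_neg (by simp only [Fin.ext_iff]; omega)]
              · show (if i = ⟨m + j' + 1, by omega⟩ then (1:ℝ) else 0) = 0
                rw [if_neg (by simp only [Fin.ext_iff]; omega)]
            rw [hUi]
            conv_lhs => rw [← hfixW]
            rw [Matrix.vecMul_vecMul, hWo, Matrix.vecMul_one]
          · have him : i = ⟨m, hm'⟩ := Fin.ext (by simp only [Fin.val_mk]; omega)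
            rw [him, ← hudef, ← hrowW, Matrix.vecMul_vecMul, hWo, Matrix.vecMul_one]
            funext j
            simp only [ebas, Fin.ext_iff]
            by_cases hj : (j:ℕ) = m <;> simp [hj, eq_comm]
        intro j
        rw [key]
      have hfix₂ : ∀ i j : Fin d, ((i:ℕ) < d - (n'+1) ∨ (j:ℕ) < d - (n'+1)) →
          U₂ i j = if i = j then 1 else 0 := by
        intro i j h
        rcases h with h | h
        · exact hrowsU₂ i (by omega) j
        · exact col_of_row U₂ hU₂UUt j (hrowsU₂ j (by omega)) i
      obtain ⟨α₂, hα₂mem, hα₂prod⟩ := ih (by omega) U₂ hU₂o hU₂det hfix₂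
      simp only [Nat.add_sub_cancel] at hα₂prod
      refine ⟨fun r j => if r = n' then θ j else α₂ r j, ?_, ?_⟩
      · intro r' hr'
        simp only [Nat.add_sub_cancel] at hr'
        by_cases h : r' = n'
        · subst h
          simp only [if_pos rfl]
          exact ⟨hθ0, fun j' h1 h2 => hθj j' h1 (by omega)⟩
        · simp only [if_neg h]
          exact hα₂mem r' (by omega)
      · have hUW : U = U₂ * W := by
          rw [hU₂def, Matrix.mul_assoc, hWtW, Matrix.mul_one]
        simp only [Nat.add_sub_cancel]
        rw [List.range_succ, List.map_append, List.prod_append, List.map_cons, List.map_nil,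
          List.prod_cons, List.prod_nil, mul_one, hUW, hα₂prod]
        congr 1
        · -- products over range n' agree
          congr 1
          rw [List.map_eq_map_iff]
          intro r' hr'
          have hr'n : r' ≠ n' := by
            simp only [List.mem_range] at hr'
            omega
          congr 1
          rw [List.map_eq_map_iff]
          intro j' _
          rw [if_neg hr'n]
        · -- the last factor is W
          rw [hWdef]
          congr 1
          rw [List.map_eq_map_iff]
          intro j' _
          rw [if_pos rfl, show d - 2 - n' = m from by omega]


/-- Hurwitz: every `U ∈ SO(d)`, `d ≥ 2`, factors as
`U = ∏_{r=1}^{d−1} ∏_{j=1}^{r} R(d−1−r+j, α^r_j)` with `α^r_1 ∈ [0,2π)` and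
`α^r_j ∈ [0,π)` for `j ≥ 2`.  Here `r, j` are re-indexed from `0`
(`r = r'+1`, `j = j'+1`), so the 1-indexed rotation index `d−1−r+j`
becomes the 0-indexed `d−2−r'+j'`, and the products are ordered lists. -/
theorem statement_15 (d : ℕ) (hd : 2 ≤ d) (U : Matrix (Fin d) (Fin d) ℝ)
    (hU : Uᵀ * U = 1) (hdet : U.det = 1) :
    ∃ α : ℕ → ℕ → ℝ,
      (∀ r' < d - 1, α r' 0 ∈ Set.Ico 0 (2 * Real.pi) ∧
        ∀ j', 1 ≤ j' → j' ≤ r' → α r' j' ∈ Set.Ico 0 Real.pi) ∧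
      U = ((List.range (d - 1)).map fun r' =>
            (((List.range (r' + 1)).map fun j' =>
              givens d (d - 2 - r' + j') (α r' j')).prod)).prod := by
  exact block d (le_refl d) U hU hdet fun i j h => by
    exfalso; rcases h with h | h <;> omega
end
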